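/- arXiv:2407.01387 — 4 statements merged into one kernel-verified Lean document; each statement's English description precedes it below -/
import Mathlib

section
/- Let (f,α) and (g,β) be coherent labelled coloured configurations and let ε ∈ ℤ. Then in the ring ℚ(X)⟦Y⟧ of formal power series over the field of rational functions ℚ(X), the Hadamard product in Y satisfies W^ε_{f,α} *_Y W^ε_{g,β} = W^ε_{f⧢g, α∪β}. -/
open scoped Classical

noncomputable section

/-- A coloured permutation: a list of (symbol, colour) pairs. -/
abbrev CPerm : Type := List (ℕ × ℕ)

/-- `a` is a genuine coloured permutation: distinct, positive symbols. -/
def IsCPerm (a : CPerm) : Prop :=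
  (a.map Prod.fst).Nodup ∧ ∀ p ∈ a, 0 < p.1

/-- The colour order on coloured integers: `p < q` iff the colour of `p` is bigger
(as an integer), or the colours agree and the symbol of `p` is smaller. -/
def cLt (p q : ℕ × ℕ) : Prop :=
  q.2 < p.2 ∨ (p.2 = q.2 ∧ p.1 < q.1)

instance : DecidableRel cLt := fun p q => by unfold cLt; infer_instance

/-- The descent set of a coloured permutation (positions `0,…,n−1`; position `i ≥ 1`
is a descent iff the `(i+1)`-st entry is smaller than the `i`-th entry (1-indexed)
in the colour order; `0` is a descent iff the first colour is nonzero). -/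
def DesSet (a : CPerm) : Finset ℕ :=
  (Finset.range a.length).filter fun i =>
    if i = 0 then (a.getD 0 (0, 0)).2 ≠ 0
    else cLt (a.getD i (0, 0)) (a.getD (i - 1) (0, 0))

/-- Descent number. -/
def des (a : CPerm) : ℕ := (DesSet a).card

/-- Comajor index. -/
def comaj (a : CPerm) : ℕ := ∑ i ∈ DesSet a, (a.length - i)

/-- `colVec a j` is the number of entries of `a` of colour `j`. -/
def colVec (a : CPerm) (j : ℕ) : ℕ := (a.map Prod.snd).count j

/-- The multiset of shuffles of two lists. -/
def shuffles {α : Type*} : List α → List α → Multiset (List α)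
  | [], bs => {bs}
  | a :: as, [] => {a :: as}
  | a :: as, b :: bs =>
      ((shuffles as (b :: bs)).map (a :: ·)) + ((shuffles (a :: as) bs).map (b :: ·))
  termination_by as bs => as.length + bs.length

/-- The set of symbols of a coloured permutation. -/
def symbols (a : CPerm) : Finset ℕ := (a.map Prod.fst).toFinset

/-- The set of nonzero colours of a coloured permutation. -/
def paletteStar (a : CPerm) : Finset ℕ := ((a.map Prod.snd).toFinset).erase 0

/-- Two coloured permutations are symbol-disjoint if they share no symbols. -/
def SymbolDisjoint (a b : CPerm) : Prop := Disjoint (symbols a) (symbols b)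

/-- `a` is `r`-coloured: all colours lie in `{0,…,r−1}`. -/
def RColoured (r : ℕ) (a : CPerm) : Prop := ∀ p ∈ a, p.2 < r

/-- Symbols of a coloured configuration (= multiset of coloured permutations). -/
def msymbols (f : Multiset CPerm) : Finset ℕ := (f.map symbols).sup

/-- `palette*` of a coloured configuration. -/
def mpalette (f : Multiset CPerm) : Finset ℕ := (f.map paletteStar).sup

/-- The shuffle of two coloured configurations (bi-additive extension). -/
def mshuffle (f g : Multiset CPerm) : Multiset CPerm :=
  f.bind fun a => g.bind fun b => shuffles a b

/-- Hadamard product of formal power series. -/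
def hadamard {R : Type*} [Semiring R] (A B : PowerSeries R) : PowerSeries R :=
  PowerSeries.mk fun k => (PowerSeries.coeff k) A * (PowerSeries.coeff k) B

/-- The geometric series `1/(1 − c·Y) = Σ_k c^k Y^k`. -/
def geom {R : Type*} [Semiring R] (c : R) : PowerSeries R :=
  PowerSeries.mk fun k => c ^ k

/-- The field ℚ(X) of rational functions. -/
abbrev K : Type := RatFunc ℚ

/-- The variable X of ℚ(X). -/
def XX : K := RatFunc.X

/-- Membership in `U = {±X^k : k ∈ ℤ}`. -/
def InU (u : K) : Prop := ∃ k : ℤ, u = XX ^ k ∨ u = -XX ^ k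

/-- `α(a) = Π_i α(γ_i)`. -/
def alphaProd (α : ℕ → K) (a : CPerm) : K := (a.map fun p => α p.2).prod

/-- The summand of `W^ε_{f,α}` corresponding to a single coloured permutation. -/
def Wterm (ε : ℤ) (α : ℕ → K) (a : CPerm) : PowerSeries K :=
  PowerSeries.C (alphaProd α a * XX ^ (ε * (comaj a : ℤ))) * PowerSeries.X ^ des a *
    ∏ i ∈ Finset.range (a.length + 1), geom (XX ^ (ε * (i : ℤ)))

/-- `W^ε_{f,α} = Σ_a f_a α(a) X^{ε·comaj(a)} Y^{des(a)} / ((1−Y)⋯(1−X^{ε|a|}Y))`. -/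
def W (ε : ℤ) (α : ℕ → K) (f : Multiset CPerm) : PowerSeries K :=
  (f.map (Wterm ε α)).sum

/-- `(f,α)` is a labelled coloured configuration. -/
def IsLCC (f : Multiset CPerm) (α : ℕ → K) : Prop :=
  (∀ a ∈ f, IsCPerm a) ∧ (∀ c, InU (α c)) ∧ (∀ c ∉ mpalette f, α c = 1)

section Aux
open Finset PowerSeries

lemma cLt_trans {a b c : ℕ × ℕ} (h1 : cLt a b) (h2 : cLt b c) : cLt a c := by
  unfold cLt at *; omega

lemma cLt_total {a b : ℕ × ℕ} (h : a.1 ≠ b.1) : cLt a b ∨ cLt b a := by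
  unfold cLt; omega

lemma cLt_asymm {a b : ℕ × ℕ} (h : cLt a b) : ¬ cLt b a := by
  unfold cLt at *; omega

/-- The sum over compatible sequences with previous entry `p` of value `ℓ`, all
values bounded by `k`. -/
def Fc (ε : ℤ) (k : ℕ) : (ℕ × ℕ) → ℕ → CPerm → K
  | _, _, [] => 1
  | p, ℓ, e :: a =>
      ∑ v ∈ Finset.Icc (ℓ + if cLt e p then 1 else 0) k, (XX ^ ε) ^ v * Fc ε k e v a

lemma Icc_filter_Icc (lo hi lo' hi' : ℕ) (h1 : lo ≤ lo') :
    (Finset.Icc lo hi).filter (fun v => lo' ≤ v ∧ v ≤ hi') = Finset.Icc lo' (min hi' hi) := by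
  ext v; simp only [Finset.mem_filter, Finset.mem_Icc]; omega

lemma sum_Icc_expand {M : Type*} [AddCommMonoid M] (lo hi lo' hi' : ℕ) (h1 : lo ≤ lo')
    (h2 : hi' ≤ hi) (t : ℕ → M) :
    ∑ v ∈ Finset.Icc lo' hi', t v = ∑ v ∈ Finset.Icc lo hi, if lo' ≤ v ∧ v ≤ hi' then t v else 0 := by
  rw [← Finset.sum_filter, Icc_filter_Icc lo hi lo' hi' h1, min_eq_left h2]

end Aux
section Aux2
open Finset

variable {M : Type*} [AddCommMonoid M]

lemma sum_swap_tri (d L k : ℕ) (t : ℕ → ℕ → M) :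
    ∑ w ∈ Icc L k, ∑ v ∈ Icc (w + d) k, t v w
      = ∑ v ∈ Icc d k, ∑ w ∈ Icc L (v - d), t v w := by
  have h1 : ∀ w ∈ Icc L k, ∑ v ∈ Icc (w + d) k, t v w
      = ∑ v ∈ Icc 0 k, if w + d ≤ v ∧ v ≤ k then t v w else 0 := by
    intro w hw
    exact sum_Icc_expand 0 k (w + d) k (Nat.zero_le _) le_rfl _
  rw [Finset.sum_congr rfl h1, Finset.sum_comm]
  have h2 : ∀ v ∈ Icc 0 k, ∑ w ∈ Icc L k, (if w + d ≤ v ∧ v ≤ k then t v w else 0)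
      = if d ≤ v ∧ v ≤ k then ∑ w ∈ Icc L (v - d), t v w else 0 := by
    intro v hv
    simp only [Finset.mem_Icc] at hv
    by_cases hd : d ≤ v
    · rw [if_pos ⟨hd, hv.2⟩, sum_Icc_expand L k L (v - d) le_rfl (by omega)]
      apply Finset.sum_congr rfl; intro w hw
      simp only [Finset.mem_Icc] at hw
      congr 1; simp only [eq_iff_iff]; omega
    · rw [if_neg (by omega)]
      apply Finset.sum_eq_zero; intro w hw
      rw [if_neg (by omega)]
  rw [Finset.sum_congr rfl h2, ← Finset.sum_filter, Icc_filter_Icc 0 k d k (Nat.zero_le _),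
    min_self]

lemma sum_swap_tri' (d L k : ℕ) (t : ℕ → ℕ → M)
    (h0 : ∀ v ∈ Icc d k, ∀ w ∈ Icc L k, ¬ (w ≤ v - d) → t v w = 0) :
    ∑ w ∈ Icc L k, ∑ v ∈ Icc d k, t v w = ∑ v ∈ Icc d k, ∑ w ∈ Icc L (v - d), t v w := by
  rw [Finset.sum_comm]
  apply Finset.sum_congr rfl; intro v hv
  have hvk : v ≤ k := (Finset.mem_Icc.mp hv).2
  rw [sum_Icc_expand L k L (v - d) le_rfl (by omega)]
  apply Finset.sum_congr rfl; intro w hw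
  simp only [Finset.mem_Icc] at hw
  by_cases h : L ≤ w ∧ w ≤ v - d
  · rw [if_pos h]
  · rw [if_neg h]
    exact h0 v hv w (Finset.mem_Icc.mpr hw) (by omega)

lemma sum_rect_split (k L Mo : ℕ) (hML : Mo ≤ L) (hLM : L ≤ Mo + 1) (t : ℕ → ℕ → M) :
    (∑ v ∈ Icc L k, ∑ w ∈ Icc v k, t v w) + (∑ w ∈ Icc Mo k, ∑ v ∈ Icc (w + 1) k, t v w)
      = ∑ v ∈ Icc L k, ∑ w ∈ Icc Mo k, t v w := by
  have h1 : ∀ v ∈ Icc L k, ∑ w ∈ Icc v k, t v w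
      = ∑ w ∈ Icc Mo k, if v ≤ w ∧ w ≤ k then t v w else 0 := by
    intro v hv
    exact sum_Icc_expand Mo k v k (le_trans hML (Finset.mem_Icc.mp hv).1) le_rfl _
  have h2 : ∀ w ∈ Icc Mo k, ∑ v ∈ Icc (w + 1) k, t v w
      = ∑ v ∈ Icc L k, if w + 1 ≤ v ∧ v ≤ k then t v w else 0 := by
    intro w hw
    exact sum_Icc_expand L k (w + 1) k (by have := (Finset.mem_Icc.mp hw).1; omega) le_rfl _
  rw [Finset.sum_congr rfl h1, Finset.sum_congr rfl h2, Finset.sum_comm (s := Icc Mo k)]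
  rw [← Finset.sum_add_distrib]
  apply Finset.sum_congr rfl; intro v hv
  rw [← Finset.sum_add_distrib]
  apply Finset.sum_congr rfl; intro w hw
  simp only [Finset.mem_Icc] at hv hw
  split_ifs <;> first | omega | simp

end Aux2
section Aux3
open Finset

lemma Fc_concat (ε : ℤ) (k : ℕ) (e : ℕ × ℕ) :
    ∀ (a : CPerm) (p : ℕ × ℕ) (ℓ : ℕ),
    Fc ε k p ℓ (a ++ [e]) =
      ∑ v ∈ Finset.Icc ((if a = [] then ℓ else 0)
          + (if cLt e (a.getD (a.length - 1) p) then 1 else 0)) k,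
        (XX ^ ε) ^ v * Fc ε (v - (if cLt e (a.getD (a.length - 1) p) then 1 else 0)) p ℓ a := by
  intro a
  induction a with
  | nil =>
    intro p ℓ
    simp [Fc]
  | cons e' a' ih =>
    intro p ℓ
    have hcons : ((e' :: a') ++ [e]) = e' :: (a' ++ [e]) := by simp
    rw [hcons]
    show (∑ w ∈ Finset.Icc (ℓ + if cLt e' p then 1 else 0) k,
        (XX ^ ε) ^ w * Fc ε k e' w (a' ++ [e])) = _
    have hg : (e' :: a').getD ((e' :: a').length - 1) p = a'.getD (a'.length - 1) e' := by
      rcases a' with _ | ⟨e'', a''⟩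
      · simp
      · show (e' :: e'' :: a'').getD (a''.length + 1) p = (e'' :: a'').getD ((e'' :: a'').length - 1) e'
        rw [List.getD_cons_succ]
        rw [List.getD_eq_getElem _ _ (by simp), List.getD_eq_getElem _ _ (by simp)]
        simp
    rw [hg]
    set d : ℕ := if cLt e (a'.getD (a'.length - 1) e') then 1 else 0 with hd
    rcases a' with _ | ⟨e'', a''⟩
    · -- a' = []
      have hdd : d = if cLt e e' then 1 else 0 := by simp [hd]
      have hstep : ∀ w, Fc ε k e' w ([] ++ [e])
          = ∑ v ∈ Finset.Icc (w + d) k, (XX ^ ε) ^ v := by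
        intro w
        show (∑ v ∈ Finset.Icc (w + if cLt e e' then 1 else 0) k,
          (XX ^ ε) ^ v * Fc ε k e v []) = _
        rw [← hdd]
        apply Finset.sum_congr rfl; intro v _
        show (XX ^ ε) ^ v * 1 = _
        rw [mul_one]
      have hL : (∑ w ∈ Finset.Icc (ℓ + if cLt e' p then 1 else 0) k,
          (XX ^ ε) ^ w * Fc ε k e' w ([] ++ [e]))
          = ∑ w ∈ Finset.Icc (ℓ + if cLt e' p then 1 else 0) k,
              ∑ v ∈ Finset.Icc (w + d) k, (XX ^ ε) ^ v * (XX ^ ε) ^ w := by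
        apply Finset.sum_congr rfl; intro w _
        rw [hstep, Finset.mul_sum]
        apply Finset.sum_congr rfl; intro v _
        ring
      rw [hL, sum_swap_tri d (ℓ + if cLt e' p then 1 else 0) k]
      rw [if_neg (show (e' :: ([] : CPerm)) ≠ [] by simp), zero_add]
      apply Finset.sum_congr rfl; intro v _
      show _ = (XX ^ ε) ^ v *
        ∑ w ∈ Finset.Icc (ℓ + if cLt e' p then 1 else 0) (v - d), (XX ^ ε) ^ w * Fc ε (v-d) e' w []
      show _ = (XX ^ ε) ^ v *
        ∑ w ∈ Finset.Icc (ℓ + if cLt e' p then 1 else 0) (v - d), (XX ^ ε) ^ w * 1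
      rw [Finset.mul_sum]
      apply Finset.sum_congr rfl; intro w _
      ring
    · -- a' = e'' :: a''
      have hane : (e'' :: a'') ≠ [] := by simp
      have hstep : ∀ w, Fc ε k e' w ((e'' :: a'') ++ [e])
          = ∑ v ∈ Finset.Icc d k,
              (XX ^ ε) ^ v * Fc ε (v - d) e' w (e'' :: a'') := by
        intro w
        rw [ih e' w, if_neg hane, zero_add]
      have hL : (∑ w ∈ Finset.Icc (ℓ + if cLt e' p then 1 else 0) k,
          (XX ^ ε) ^ w * Fc ε k e' w ((e'' :: a'') ++ [e]))
          = ∑ w ∈ Finset.Icc (ℓ + if cLt e' p then 1 else 0) k,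
              ∑ v ∈ Finset.Icc d k,
                ((XX ^ ε) ^ v * (XX ^ ε) ^ w) * Fc ε (v - d) e' w (e'' :: a'') := by
        apply Finset.sum_congr rfl; intro w _
        rw [hstep, Finset.mul_sum]
        apply Finset.sum_congr rfl; intro v _
        ring
      rw [hL]
      rw [sum_swap_tri' d (ℓ + if cLt e' p then 1 else 0) k
        (fun v w => ((XX ^ ε) ^ v * (XX ^ ε) ^ w) * Fc ε (v - d) e' w (e'' :: a''))]
      · rw [if_neg (show (e' :: e'' :: a'') ≠ [] by simp), zero_add]
        apply Finset.sum_congr rfl; intro v _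
        show _ = (XX ^ ε) ^ v * ∑ w ∈ Finset.Icc (ℓ + if cLt e' p then 1 else 0) (v - d),
            (XX ^ ε) ^ w * Fc ε (v - d) e' w (e'' :: a'')
        rw [Finset.mul_sum]
        apply Finset.sum_congr rfl; intro w _
        ring
      · intro v hv w hw hnw
        have : Fc ε (v - d) e' w (e'' :: a'') = 0 := by
          show (∑ u ∈ Finset.Icc (w + if cLt e'' e' then 1 else 0) (v - d),
            (XX ^ ε) ^ u * Fc ε (v - d) e'' u a'') = 0
          rw [Finset.Icc_eq_empty (by omega), Finset.sum_empty]
        rw [this, mul_zero]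

end Aux3
section Aux4
open Finset

lemma msum_map_fsum {α : Type*} {ι : Type*} {M : Type*} [AddCommMonoid M]
    (s : Multiset α) (S : Finset ι) (g : ι → α → M) :
    (s.map (fun c => ∑ v ∈ S, g v c)).sum = ∑ v ∈ S, (s.map (g v)).sum := by
  induction s using Multiset.induction with
  | empty => simp
  | cons a s ih => simp [ih, Finset.sum_add_distrib]

lemma Fc_shuffles (ε : ℤ) (k : ℕ) :
    ∀ (n : ℕ) (a b : CPerm), a.length + b.length ≤ n →
    ∀ (p : ℕ × ℕ) (ℓ : ℕ),
    (a.map Prod.fst).Nodup → (b.map Prod.fst).Nodup →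
    (∀ x ∈ a, ∀ y ∈ b, x.1 ≠ y.1) →
    (∀ x ∈ a, x.1 ≠ p.1) → (∀ y ∈ b, y.1 ≠ p.1) →
    ((shuffles a b).map (Fc ε k p ℓ)).sum = Fc ε k p ℓ a * Fc ε k p ℓ b := by
  intro n
  induction n with
  | zero =>
    intro a b hlen p ℓ _ _ _ _ _
    have ha : a = [] := by cases a <;> simp_all
    have hb : b = [] := by cases b <;> simp_all
    subst ha hb
    simp [shuffles, Fc]
  | succ n ih =>
    intro a b hlen p ℓ hna hnb hab hap hbp
    rcases a with _ | ⟨e, as⟩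
    · show (Multiset.map (Fc ε k p ℓ) (shuffles [] b)).sum = Fc ε k p ℓ [] * Fc ε k p ℓ b
      rw [shuffles]
      show Fc ε k p ℓ b + 0 = Fc ε k p ℓ [] * Fc ε k p ℓ b
      show Fc ε k p ℓ b + 0 = 1 * Fc ε k p ℓ b
      rw [one_mul, add_zero]
    rcases b with _ | ⟨f, bs⟩
    · show (Multiset.map (Fc ε k p ℓ) (shuffles (e :: as) [])).sum
          = Fc ε k p ℓ (e :: as) * Fc ε k p ℓ []
      rw [shuffles]
      show Fc ε k p ℓ (e :: as) + 0 = Fc ε k p ℓ (e :: as) * 1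
      rw [mul_one, add_zero]
    -- main case
    have hef : e.1 ≠ f.1 := hab e (by simp) f (by simp)
    have hna' := List.nodup_cons.mp hna
    have hnb' := List.nodup_cons.mp hnb
    have hnas : (as.map Prod.fst).Nodup := hna'.2
    have hnbs : (bs.map Prod.fst).Nodup := hnb'.2
    have heas : ∀ x ∈ as, x.1 ≠ e.1 := by
      intro x hx h
      exact hna'.1 (h ▸ List.mem_map_of_mem (f := Prod.fst) hx)
    have hfbs : ∀ y ∈ bs, y.1 ≠ f.1 := by
      intro y hy h
      exact hnb'.1 (h ▸ List.mem_map_of_mem (f := Prod.fst) hy)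
    have hshuf : shuffles (e :: as) (f :: bs)
        = ((shuffles as (f :: bs)).map (e :: ·)) + ((shuffles (e :: as) bs).map (f :: ·)) := by
      rw [shuffles]
    rw [hshuf, Multiset.map_add, Multiset.sum_add, Multiset.map_map, Multiset.map_map]
    set x : K := XX ^ ε with hx
    set L : ℕ := ℓ + if cLt e p then 1 else 0 with hL
    set Mo : ℕ := ℓ + if cLt f p then 1 else 0 with hMo
    have part1 : (Multiset.map (Fc ε k p ℓ ∘ (e :: ·)) (shuffles as (f :: bs))).sum
        = ∑ v ∈ Icc L k, x ^ v * (Fc ε k e v as * Fc ε k e v (f :: bs)) := by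
      have : (Fc ε k p ℓ ∘ (e :: ·)) = fun c => ∑ v ∈ Icc L k, x ^ v * Fc ε k e v c := by
        funext c; rfl
      rw [this]
      rw [msum_map_fsum]
      apply Finset.sum_congr rfl; intro v _
      rw [Multiset.sum_map_mul_left, ih as (f :: bs) (by simp at hlen ⊢; omega) e v hnas hnb
        (fun x hx y hy => hab x (by simp [hx]) y hy)
        (fun x hx => heas x hx)
        (fun y hy => (hab e (by simp) y hy).symm)]
    have part2 : (Multiset.map (Fc ε k p ℓ ∘ (f :: ·)) (shuffles (e :: as) bs)).sum
        = ∑ w ∈ Icc Mo k, x ^ w * (Fc ε k f w (e :: as) * Fc ε k f w bs) := by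
      have : (Fc ε k p ℓ ∘ (f :: ·)) = fun c => ∑ w ∈ Icc Mo k, x ^ w * Fc ε k f w c := by
        funext c; rfl
      rw [this]
      rw [msum_map_fsum]
      apply Finset.sum_congr rfl; intro w _
      rw [Multiset.sum_map_mul_left, ih (e :: as) bs (by simp at hlen ⊢; omega) f w hna hnbs
        (fun x hx y hy => hab x hx y (by simp [hy]))
        (fun x hx => hab x hx f (by simp))
        (fun y hy => hfbs y hy)]
    rw [part1, part2]
    have hrhs : Fc ε k p ℓ (e :: as) * Fc ε k p ℓ (f :: bs)
        = ∑ v ∈ Icc L k, ∑ w ∈ Icc Mo k,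
            (x ^ v * Fc ε k e v as) * (x ^ w * Fc ε k f w bs) := by
      show (∑ v ∈ Icc L k, x ^ v * Fc ε k e v as) * (∑ w ∈ Icc Mo k, x ^ w * Fc ε k f w bs) = _
      rw [Finset.sum_mul_sum]
    rw [hrhs]
    set t : ℕ → ℕ → K := fun v w => (x ^ v * Fc ε k e v as) * (x ^ w * Fc ε k f w bs) with ht
    rcases cLt_total hef with hc | hc
    · -- e < f : part1 inner lower bound v + 0, part2 inner lower bound w + 1
      have hfe : ¬ cLt f e := cLt_asymm hc
      have hMoL : Mo ≤ L := by
        rw [hL, hMo]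
        have : (if cLt f p then 1 else 0 : ℕ) ≤ if cLt e p then 1 else 0 := by
          by_cases h : cLt f p
          · rw [if_pos h, if_pos (cLt_trans hc h)]
          · rw [if_neg h]; omega
        omega
      have hLMo : L ≤ Mo + 1 := by rw [hL, hMo]; split_ifs <;> omega
      have e1 : ∀ v ∈ Icc L k, x ^ v * (Fc ε k e v as * Fc ε k e v (f :: bs))
          = ∑ w ∈ Icc v k, t v w := by
        intro v _
        show x ^ v * (Fc ε k e v as *
          ∑ w ∈ Icc (v + if cLt f e then 1 else 0) k, x ^ w * Fc ε k f w bs) = _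
        rw [if_neg hfe, add_zero, Finset.mul_sum, Finset.mul_sum]
        apply Finset.sum_congr rfl; intro w _
        rw [ht]; ring
      have e2 : ∀ w ∈ Icc Mo k, x ^ w * (Fc ε k f w (e :: as) * Fc ε k f w bs)
          = ∑ v ∈ Icc (w + 1) k, t v w := by
        intro w _
        show x ^ w * ((∑ v ∈ Icc (w + if cLt e f then 1 else 0) k, x ^ v * Fc ε k e v as)
          * Fc ε k f w bs) = _
        rw [if_pos hc, Finset.sum_mul, Finset.mul_sum]
        apply Finset.sum_congr rfl; intro v _
        rw [ht]; ring
      rw [Finset.sum_congr rfl e1, Finset.sum_congr rfl e2]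
      exact sum_rect_split k L Mo hMoL hLMo t
    · -- f < e
      have hef' : ¬ cLt e f := cLt_asymm hc
      have hLMo : L ≤ Mo := by
        rw [hL, hMo]
        have : (if cLt e p then 1 else 0 : ℕ) ≤ if cLt f p then 1 else 0 := by
          by_cases h : cLt e p
          · rw [if_pos h, if_pos (cLt_trans hc h)]
          · rw [if_neg h]; omega
        omega
      have hMoL : Mo ≤ L + 1 := by rw [hL, hMo]; split_ifs <;> omega
      have e1 : ∀ v ∈ Icc L k, x ^ v * (Fc ε k e v as * Fc ε k e v (f :: bs))
          = ∑ w ∈ Icc (v + 1) k, t v w := by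
        intro v _
        show x ^ v * (Fc ε k e v as *
          ∑ w ∈ Icc (v + if cLt f e then 1 else 0) k, x ^ w * Fc ε k f w bs) = _
        rw [if_pos hc, Finset.mul_sum, Finset.mul_sum]
        apply Finset.sum_congr rfl; intro w _
        rw [ht]; ring
      have e2 : ∀ w ∈ Icc Mo k, x ^ w * (Fc ε k f w (e :: as) * Fc ε k f w bs)
          = ∑ v ∈ Icc w k, t v w := by
        intro w _
        show x ^ w * ((∑ v ∈ Icc (w + if cLt e f then 1 else 0) k, x ^ v * Fc ε k e v as)
          * Fc ε k f w bs) = _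
        rw [if_neg hef', add_zero, Finset.sum_mul, Finset.mul_sum]
        apply Finset.sum_congr rfl; intro v _
        rw [ht]; ring
      rw [Finset.sum_congr rfl e1, Finset.sum_congr rfl e2]
      rw [add_comm]
      rw [sum_rect_split k Mo L hLMo hMoL (fun w v => t v w)]
      exact Finset.sum_comm
end Aux4
section Aux5
open Finset

lemma DesSet_subset_range (a : CPerm) : DesSet a ⊆ Finset.range a.length :=
  Finset.filter_subset _ _

lemma DesSet_concat (a : CPerm) (e : ℕ × ℕ) :
    DesSet (a ++ [e]) = DesSet a
      ∪ (if cLt e (a.getD (a.length - 1) (0, 0)) then {a.length} else ∅) := by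
  ext i
  simp only [DesSet, Finset.mem_union, Finset.mem_filter, Finset.mem_range,
    List.length_append, List.length_singleton]
  rcases a with _ | ⟨e0, a0⟩
  · -- a = []
    simp only [List.nil_append, List.length_nil, List.getD_nil]
    constructor
    · rintro ⟨hi, hP⟩
      have hi0 : i = 0 := by omega
      subst hi0
      rw [if_pos rfl] at hP
      right
      have : cLt e (0, 0) := by
        unfold cLt
        simp only [List.getD_cons_zero] at hP
        omega
      simp [this]
    · rintro (⟨hi, _⟩ | hmem)
      · omega
      · by_cases hc : cLt e (0, 0)
        · simp only [hc, ite_true] at hmem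
          simp only [Finset.mem_singleton] at hmem
          subst hmem
          refine ⟨by omega, ?_⟩
          rw [if_pos rfl]
          simp only [List.getD_cons_zero]
          unfold cLt at hc; omega
        · simp [hc] at hmem
  · -- a = e0 :: a0 nonempty
    set a : CPerm := e0 :: a0 with ha
    have halen : 0 < a.length := by simp [ha]
    have hgetD : ∀ j, j < a.length → (a ++ [e]).getD j (0,0) = a.getD j (0,0) := by
      intro j hj; exact List.getD_append a [e] (0,0) j hj
    have hgetDlast : (a ++ [e]).getD a.length (0,0) = e := by
      rw [List.getD_eq_getElem _ _ (by simp [ha])]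
      exact List.getElem_concat_length (l := a) (a := e) rfl _
    constructor
    · rintro ⟨hi, hP⟩
      by_cases hil : i < a.length
      · left
        refine ⟨hil, ?_⟩
        by_cases hi0 : i = 0
        · subst hi0
          rw [if_pos rfl] at hP ⊢
          rwa [hgetD 0 halen] at hP
        · rw [if_neg hi0] at hP ⊢
          rwa [hgetD i hil, hgetD (i-1) (by omega)] at hP
      · have hieq : i = a.length := by omega
        subst hieq
        right
        rw [if_neg (by omega)] at hP
        rw [hgetDlast, hgetD (a.length - 1) (by omega)] at hP
        rw [if_pos hP]
        simp
    · rintro (⟨hil, hP⟩ | hmem)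
      · refine ⟨by omega, ?_⟩
        by_cases hi0 : i = 0
        · subst hi0
          rw [if_pos rfl] at hP ⊢
          rwa [hgetD 0 halen]
        · rw [if_neg hi0] at hP ⊢
          rwa [hgetD i hil, hgetD (i-1) (by omega)]
      · by_cases hc : cLt e (a.getD (a.length - 1) (0,0))
        · rw [if_pos hc] at hmem
          simp only [Finset.mem_singleton] at hmem
          subst hmem
          refine ⟨by omega, ?_⟩
          rw [if_neg (by omega), hgetDlast, hgetD (a.length - 1) (by omega)]
          exact hc
        · rw [if_neg hc] at hmem; simp at hmem

lemma des_concat (a : CPerm) (e : ℕ × ℕ) :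
    des (a ++ [e]) = des a + (if cLt e (a.getD (a.length - 1) (0, 0)) then 1 else 0) := by
  rw [des, DesSet_concat]
  by_cases hc : cLt e (a.getD (a.length - 1) (0,0))
  · rw [if_pos hc, if_pos hc]
    rw [Finset.card_union_of_disjoint]
    · simp [des]
    · simp only [Finset.disjoint_singleton_right]
      intro h
      exact absurd (Finset.mem_range.mp (DesSet_subset_range a h)) (lt_irrefl _)
  · rw [if_neg hc, if_neg hc, Finset.union_empty, des, add_zero]

lemma comaj_concat (a : CPerm) (e : ℕ × ℕ) :
    comaj (a ++ [e]) = comaj a + des a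
      + (if cLt e (a.getD (a.length - 1) (0, 0)) then 1 else 0) := by
  rw [comaj, DesSet_concat]
  have hlen : (a ++ [e]).length = a.length + 1 := by simp
  have hsum : ∑ i ∈ DesSet a, ((a ++ [e]).length - i) = comaj a + des a := by
    rw [hlen, comaj, des, Finset.card_eq_sum_ones, ← Finset.sum_add_distrib]
    apply Finset.sum_congr rfl
    intro i hi
    have := Finset.mem_range.mp (DesSet_subset_range a hi)
    omega
  by_cases hc : cLt e (a.getD (a.length - 1) (0,0))
  · rw [if_pos hc, if_pos hc, Finset.sum_union]
    · rw [hsum, Finset.sum_singleton, hlen]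
      omega
    · simp only [Finset.disjoint_singleton_right]
      intro h
      exact absurd (Finset.mem_range.mp (DesSet_subset_range a h)) (lt_irrefl _)
  · rw [if_neg hc, if_neg hc, Finset.union_empty, hsum, add_zero]
end Aux5
section Aux6
open Finset PowerSeries

lemma coeff_geom (c : K) (k : ℕ) : PowerSeries.coeff k (geom c) = c ^ k := by
  simp [geom]

lemma rescale_geom (c r : K) : PowerSeries.rescale c (geom r) = geom (c * r) := by
  ext k
  simp [geom, PowerSeries.coeff_rescale, mul_pow]

lemma rescale_C' (c r : K) : PowerSeries.rescale c (PowerSeries.C r) = PowerSeries.C r := by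
  ext k
  simp only [PowerSeries.coeff_rescale, PowerSeries.coeff_C]
  by_cases h : k = 0 <;> simp [h]

lemma rescale_X_pow' (c : K) (m : ℕ) :
    PowerSeries.rescale c (PowerSeries.X ^ m)
      = PowerSeries.C (c ^ m) * PowerSeries.X ^ m := by
  ext k
  simp only [PowerSeries.coeff_rescale, PowerSeries.coeff_X_pow, PowerSeries.coeff_C_mul]
  by_cases h : k = m
  · subst h; simp
  · simp [h]

lemma coeff_geom_one_mul (A : PowerSeries K) (k : ℕ) :
    PowerSeries.coeff k (geom 1 * A) = ∑ j ∈ Finset.Icc 0 k, PowerSeries.coeff j A := by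
  rw [PowerSeries.coeff_mul]
  have h1 : ∀ p ∈ Finset.HasAntidiagonal.antidiagonal k,
      PowerSeries.coeff p.1 (geom 1) * PowerSeries.coeff p.2 A
        = PowerSeries.coeff p.2 A := by
    intro p _; rw [coeff_geom, one_pow, one_mul]
  rw [Finset.sum_congr rfl h1, Finset.Nat.sum_antidiagonal_eq_sum_range_succ_mk]
  have h2 : ∑ j ∈ Finset.range (k + 1), PowerSeries.coeff (k - j) A
      = ∑ j ∈ Finset.range (k + 1), PowerSeries.coeff j A := by
    have := Finset.sum_range_reflect (fun j => PowerSeries.coeff j A) (k + 1)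
    simpa using this
  rw [h2]
  apply Finset.sum_congr _ (fun _ _ => rfl)
  ext j; simp

/-- The closed form for the generating function of compatible sequences. -/
lemma closed_eq (ε : ℤ) (a : CPerm) :
    PowerSeries.mk (fun k => Fc ε k (0, 0) 0 a)
      = PowerSeries.C ((XX ^ ε) ^ comaj a) * PowerSeries.X ^ des a *
          ∏ i ∈ Finset.range (a.length + 1), geom ((XX ^ ε) ^ i) := by
  induction a using List.reverseRecOn with
  | nil =>
    have hd : des ([] : CPerm) = 0 := by simp [des, DesSet]
    have hc : comaj ([] : CPerm) = 0 := by simp [comaj, DesSet]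
    rw [hd, hc]
    ext k
    simp [Fc, geom, coeff_mk]
  | append_singleton a e ih =>
    set q : K := XX ^ ε with hq
    set d : ℕ := if cLt e (a.getD (a.length - 1) (0, 0)) then 1 else 0 with hd
    have key : PowerSeries.mk (fun k => Fc ε k (0, 0) 0 (a ++ [e]))
        = geom 1 * (PowerSeries.C (q ^ d) * (PowerSeries.rescale q
            (PowerSeries.mk (fun k => Fc ε k (0, 0) 0 a)) * PowerSeries.X ^ d)) := by
      ext k
      rw [coeff_mk, Fc_concat, coeff_geom_one_mul]
      have hcoeff : ∀ j ∈ Finset.Icc 0 k,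
          PowerSeries.coeff j (PowerSeries.C (q ^ d) * (PowerSeries.rescale q
            (PowerSeries.mk (fun k => Fc ε k (0, 0) 0 a)) * PowerSeries.X ^ d))
          = if d ≤ j ∧ j ≤ k then q ^ j * Fc ε (j - d) (0, 0) 0 a else 0 := by
        intro j hj
        simp only [Finset.mem_Icc] at hj
        rw [PowerSeries.coeff_C_mul, PowerSeries.coeff_mul_X_pow',
          PowerSeries.coeff_rescale, coeff_mk]
        by_cases h : d ≤ j
        · rw [if_pos h, if_pos ⟨h, hj.2⟩, ← mul_assoc, ← pow_add]
          congr 2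
          omega
        · rw [if_neg h, if_neg (by omega), mul_zero]
      rw [Finset.sum_congr rfl hcoeff, ← sum_Icc_expand 0 k d k (Nat.zero_le _) le_rfl]
      have : (if a = [] then 0 else 0) + d = d := by split_ifs <;> omega
      rw [this]
    rw [key, ih]
    rw [map_mul, map_mul, rescale_C', rescale_X_pow', map_prod]
    have hgeom : ∀ i ∈ Finset.range (a.length + 1),
        PowerSeries.rescale q (geom (q ^ i)) = geom (q ^ (i + 1)) := by
      intro i _
      rw [rescale_geom, ← pow_succ']
    rw [Finset.prod_congr rfl hgeom]
    have hprod : ∏ i ∈ Finset.range ((a ++ [e]).length + 1), geom (q ^ i)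
        = (∏ i ∈ Finset.range (a.length + 1), geom (q ^ (i + 1))) * geom 1 := by
      have : (a ++ [e]).length + 1 = (a.length + 1) + 1 := by simp
      rw [this, Finset.prod_range_succ']
      simp
    rw [hprod, des_concat, comaj_concat, ← hd]
    simp only [pow_add, map_mul]
    ring
end Aux6
section Aux7
open Finset PowerSeries

lemma xx_pow (ε : ℤ) (m : ℕ) : XX ^ (ε * (m : ℤ)) = (XX ^ ε) ^ m := by
  rw [zpow_mul, zpow_natCast]

lemma Wterm_coeff (ε : ℤ) (α : ℕ → K) (a : CPerm) (k : ℕ) :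
    PowerSeries.coeff k (Wterm ε α a) = alphaProd α a * Fc ε k (0, 0) 0 a := by
  have h1 : Wterm ε α a = PowerSeries.C (alphaProd α a)
      * PowerSeries.mk (fun k => Fc ε k (0, 0) 0 a) := by
    rw [Wterm, closed_eq, map_mul, xx_pow]
    have : ∀ i ∈ Finset.range (a.length + 1),
        geom (XX ^ (ε * (i : ℤ))) = geom ((XX ^ ε) ^ i) := by
      intro i _; rw [xx_pow]
    rw [Finset.prod_congr rfl this]
    ring
  rw [h1, PowerSeries.coeff_C_mul, PowerSeries.coeff_mk]

lemma perm_of_mem_shuffles :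
    ∀ (n : ℕ) (a b c : CPerm), a.length + b.length ≤ n → c ∈ shuffles a b →
      c.Perm (a ++ b) := by
  intro n
  induction n with
  | zero =>
    intro a b c hlen hc
    have ha : a = [] := by cases a <;> simp_all
    have hb : b = [] := by cases b <;> simp_all
    subst ha hb
    rw [shuffles, Multiset.mem_singleton] at hc
    subst hc; simp
  | succ n ih =>
    intro a b c hlen hc
    rcases a with _ | ⟨e, as⟩
    · rw [shuffles, Multiset.mem_singleton] at hc
      subst hc; simp
    rcases b with _ | ⟨f, bs⟩
    · rw [shuffles, Multiset.mem_singleton] at hc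
      subst hc; simp
    rw [shuffles, Multiset.mem_add] at hc
    rcases hc with hc | hc
    · obtain ⟨c', hc', rfl⟩ := Multiset.mem_map.mp hc
      have hp := ih as (f :: bs) c' (by simp at hlen ⊢; omega) hc'
      exact List.Perm.cons e hp
    · obtain ⟨c', hc', rfl⟩ := Multiset.mem_map.mp hc
      have hp := ih (e :: as) bs c' (by simp at hlen ⊢; omega) hc'
      exact (List.Perm.cons f hp).trans List.perm_middle.symm

lemma alphaProd_of_shuffle {γ : ℕ → K} {a b c : CPerm} (hc : c ∈ shuffles a b) :
    alphaProd γ c = alphaProd γ a * alphaProd γ b := by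
  have hp := perm_of_mem_shuffles (a.length + b.length) a b c le_rfl hc
  unfold alphaProd
  rw [(hp.map (fun p : ℕ × ℕ => γ p.2)).prod_eq, List.map_append, List.prod_append]

lemma alphaProd_congr {γ δ : ℕ → K} {a : CPerm} (h : ∀ p ∈ a, γ p.2 = δ p.2) :
    alphaProd γ a = alphaProd δ a := by
  unfold alphaProd
  congr 1
  exact List.map_congr_left (fun p hp => h p hp)

lemma mem_mpalette {f : Multiset CPerm} {c : ℕ} :
    c ∈ mpalette f ↔ ∃ a ∈ f, c ∈ paletteStar a := by
  unfold mpalette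
  induction f using Multiset.induction with
  | empty => simp
  | cons a s ih =>
    simp only [Multiset.map_cons, Multiset.sup_cons, Finset.sup_eq_union,
      Finset.mem_union, ih, Multiset.mem_cons]
    constructor
    · rintro (h | ⟨x, hx, hh⟩)
      · exact ⟨a, Or.inl rfl, h⟩
      · exact ⟨x, Or.inr hx, hh⟩
    · rintro ⟨x, (rfl | hx), hh⟩
      · exact Or.inl hh
      · exact Or.inr ⟨x, hx, hh⟩

lemma zero_not_mem_mpalette (f : Multiset CPerm) : (0 : ℕ) ∉ mpalette f := by
  rw [mem_mpalette]
  rintro ⟨a, _, h⟩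
  simp [paletteStar] at h

lemma symbols_le_msymbols {f : Multiset CPerm} {a : CPerm} (h : a ∈ f) :
    symbols a ≤ msymbols f :=
  Multiset.le_sup (Multiset.mem_map_of_mem _ h)

lemma msum_mul_msum {α β : Type*} (s : Multiset α) (t : Multiset β) (F : α → K) (G : β → K) :
    (s.map F).sum * (t.map G).sum
      = (s.map (fun a => (t.map (fun b => F a * G b)).sum)).sum := by
  induction s using Multiset.induction with
  | empty => simp
  | cons a s ih =>
    simp only [Multiset.map_cons, Multiset.sum_cons, add_mul, ih]
    congr 1
    rw [Multiset.sum_map_mul_left]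

lemma coeff_W (ε : ℤ) (α : ℕ → K) (f : Multiset CPerm) (k : ℕ) :
    PowerSeries.coeff k (W ε α f)
      = (f.map (fun a => alphaProd α a * Fc ε k (0, 0) 0 a)).sum := by
  rw [W, map_multiset_sum, Multiset.map_map]
  congr 1
  apply Multiset.map_congr rfl
  intro a _
  exact Wterm_coeff ε α a k

end Aux7

/-- **Theorem (main, elementary form).** For coherent labelled coloured configurations
`(f,α)` and `(g,β)` and any `ε ∈ ℤ`, one has
`W^ε_{f,α} *_Y W^ε_{g,β} = W^ε_{f⧢g, α∪β}` in `ℚ(X)⟦Y⟧`. -/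
theorem hadamard_W_eq_W_shuffle (ε : ℤ) (f g : Multiset CPerm) (α β : ℕ → K)
    (hf : IsLCC f α) (hg : IsLCC g β)
    (hdisj : Disjoint (msymbols f) (msymbols g))
    (hcoh : ∀ c ∈ mpalette f ∩ mpalette g, α c = β c) :
    hadamard (W ε α f) (W ε β g) =
      W ε (fun c => if c ∈ mpalette f then α c else if c ∈ mpalette g then β c else 1)
        (mshuffle f g) := by
  obtain ⟨hf1, _, hf3⟩ := hf
  obtain ⟨hg1, _, hg3⟩ := hg
  set γ : ℕ → K := fun c => if c ∈ mpalette f then α c else if c ∈ mpalette g then β c else 1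
    with hγ
  have h0f := zero_not_mem_mpalette f
  have h0g := zero_not_mem_mpalette g
  ext k
  rw [show hadamard (W ε α f) (W ε β g)
      = PowerSeries.mk (fun k => PowerSeries.coeff k (W ε α f)
          * PowerSeries.coeff k (W ε β g)) from rfl,
    PowerSeries.coeff_mk, coeff_W, coeff_W, coeff_W]
  rw [msum_mul_msum]
  rw [mshuffle, Multiset.map_bind, Multiset.sum_bind]
  apply congrArg Multiset.sum
  apply Multiset.map_congr rfl
  intro a ha
  rw [Multiset.map_bind, Multiset.sum_bind]
  apply congrArg Multiset.sum
  apply Multiset.map_congr rfl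
  intro b hb
  -- per-pair identity
  have hca := hf1 a ha
  have hcb := hg1 b hb
  have hγa : alphaProd γ a = alphaProd α a := by
    apply alphaProd_congr
    intro p hp
    by_cases h : p.2 = 0
    · rw [h, hγ]
      simp only [if_neg h0f, if_neg h0g]
      rw [hf3 0 h0f]
    · have hmem : p.2 ∈ mpalette f := by
        rw [mem_mpalette]
        exact ⟨a, ha, Finset.mem_erase.mpr ⟨h,
          List.mem_toFinset.mpr (List.mem_map_of_mem (f := Prod.snd) hp)⟩⟩
      rw [hγ]; simp only [if_pos hmem]
  have hγb : alphaProd γ b = alphaProd β b := by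
    apply alphaProd_congr
    intro p hp
    by_cases h : p.2 = 0
    · rw [h, hγ]
      simp only [if_neg h0f, if_neg h0g]
      rw [hg3 0 h0g]
    · have hmem : p.2 ∈ mpalette g := by
        rw [mem_mpalette]
        exact ⟨b, hb, Finset.mem_erase.mpr ⟨h,
          List.mem_toFinset.mpr (List.mem_map_of_mem (f := Prod.snd) hp)⟩⟩
      rw [hγ]
      by_cases hmf : p.2 ∈ mpalette f
      · simp only [if_pos hmf]
        exact hcoh p.2 (Finset.mem_inter.mpr ⟨hmf, hmem⟩)
      · simp only [if_neg hmf, if_pos hmem]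
  have hsymdisj : Disjoint (symbols a) (symbols b) :=
    hdisj.mono (symbols_le_msymbols ha) (symbols_le_msymbols hb)
  have hcross : ∀ x ∈ a, ∀ y ∈ b, x.1 ≠ y.1 := by
    intro x hx y hy h
    have hxa : x.1 ∈ symbols a := List.mem_toFinset.mpr (List.mem_map_of_mem (f := Prod.fst) hx)
    have hyb : y.1 ∈ symbols b := List.mem_toFinset.mpr (List.mem_map_of_mem (f := Prod.fst) hy)
    exact Finset.disjoint_left.mp hsymdisj hxa (h ▸ hyb)
  have hstep : ∀ c ∈ shuffles a b,
      alphaProd γ c * Fc ε k (0, 0) 0 c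
        = (alphaProd α a * alphaProd β b) * Fc ε k (0, 0) 0 c := by
    intro c hc
    rw [alphaProd_of_shuffle hc, hγa, hγb]
  rw [Multiset.map_congr rfl hstep, Multiset.sum_map_mul_left]
  rw [Fc_shuffles ε k (a.length + b.length) a b le_rfl (0, 0) 0 hca.1 hcb.1 hcross
    (fun x hx => by have := hca.2 x hx; omega)
    (fun y hy => by have := hcb.2 y hy; omega)]
  ring
end
end

section
/- The tuple of coloured permutation statistics (des, comaj, col) is shuffle compatible: if a, b are symbol-disjoint coloured permutations and a', b' are symbol-disjoint coloured permutations with |a| = |a'|, |b| = |b'|, des(a) = des(a'), comaj(a) = comaj(a'), col(a) = col(a'), des(b) = des(b'), comaj(b) = comaj(b'), and col(b) = col(b'), then the multisets {(des(c), comaj(c), col(c)) : c ∈ a⧢b} and {(des(c'), comaj(c'), col(c')) : c' ∈ a'⧢b'} are equal. -/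
open scoped Classical

noncomputable section

namespace DCC

open Finset Polynomial

/-- Order on (value, coloured letter) pairs. -/
def pLt (p q : ℕ × ℕ × ℕ) : Prop := p.1 < q.1 ∨ (p.1 = q.1 ∧ cLt p.2 q.2)

instance : DecidableRel pLt := fun p q => by unfold pLt; infer_instance

lemma pLt_trans {p q r : ℕ × ℕ × ℕ} (h1 : pLt p q) (h2 : pLt q r) : pLt p r := by
  unfold pLt cLt at *; omega

lemma pLt_total {p q : ℕ × ℕ × ℕ} (h : p.2.1 ≠ q.2.1) : pLt p q ∨ pLt q p := by
  unfold pLt cLt at *; omega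

lemma pLt_asymm {p q : ℕ × ℕ × ℕ} (h1 : pLt p q) (h2 : pLt q p) : False := by
  unfold pLt cLt at *; omega

/-- Weighted sum over compatible labellings bounded by `k`, with previous pair `p`. -/
noncomputable def N' (k : ℕ) : ℕ × ℕ × ℕ → CPerm → Polynomial ℤ
  | p, [] => if p.1 ≤ k then 1 else 0
  | p, q :: c => ∑ w ∈ Finset.range (k+1),
      if pLt p (w, q) then Polynomial.X ^ w * N' k (w, q) c else 0

lemma N'_nil (k : ℕ) (p : ℕ × ℕ × ℕ) : N' k p [] = if p.1 ≤ k then 1 else 0 := rfl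

lemma N'_cons (k : ℕ) (p : ℕ × ℕ × ℕ) (q : ℕ × ℕ) (c : CPerm) :
    N' k p (q :: c) = ∑ w ∈ Finset.range (k+1),
      if pLt p (w, q) then Polynomial.X ^ w * N' k (w, q) c else 0 := rfl

lemma N'_eq_zero {k : ℕ} {p : ℕ × ℕ × ℕ} (h : k < p.1) (c : CPerm) : N' k p c = 0 := by
  cases c with
  | nil => rw [N'_nil, if_neg]; omega
  | cons q c =>
    rw [N'_cons]
    refine Finset.sum_eq_zero fun w hw => ?_
    rw [if_neg]
    intro hp
    have hw' : w < k + 1 := Finset.mem_range.mp hw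
    rcases hp with h1 | ⟨h1, _⟩ <;> simp at h1 <;> omega

lemma msum_fsum {α β M : Type*} [AddCommMonoid M] (S : Multiset α) (r : Finset β)
    (F : β → α → M) :
    (S.map fun e => ∑ w ∈ r, F w e).sum = ∑ w ∈ r, (S.map (F w)).sum := by
  induction S using Multiset.induction with
  | empty => simp
  | cons a S ih => simp [ih, Finset.sum_add_distrib]

lemma key_double {Mo : Type*} [CommRing Mo] (s : Finset ℕ) (f g : ℕ → Mo)
    (A B : ℕ → Prop) [DecidablePred A] [DecidablePred B]
    (D E : ℕ → ℕ → Prop) [∀ w z, Decidable (D w z)] [∀ w z, Decidable (E w z)]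
    (hde : ∀ w z, (D w z ∧ ¬ E z w) ∨ (¬ D w z ∧ E z w))
    (h1 : ∀ w z, A w → D w z → B z) (h2 : ∀ w z, B z → E z w → A w) :
    ((∑ w ∈ s, if A w then f w * (∑ z ∈ s, if D w z then g z else 0) else 0)
      + ∑ z ∈ s, if B z then (∑ w ∈ s, if E z w then f w else 0) * g z else 0)
    = (∑ w ∈ s, if A w then f w else 0) * (∑ z ∈ s, if B z then g z else 0) := by
  classical
  have L1 : (∑ w ∈ s, if A w then f w * (∑ z ∈ s, if D w z then g z else 0) else 0)
      = ∑ w ∈ s, ∑ z ∈ s, if A w ∧ D w z then f w * g z else 0 := by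
    refine Finset.sum_congr rfl fun w _ => ?_
    by_cases hA : A w
    · rw [if_pos hA, Finset.mul_sum]
      refine Finset.sum_congr rfl fun z _ => ?_
      by_cases hD : D w z <;> simp [hA, hD]
    · simp [hA]
  have L2 : (∑ z ∈ s, if B z then (∑ w ∈ s, if E z w then f w else 0) * g z else 0)
      = ∑ w ∈ s, ∑ z ∈ s, if B z ∧ E z w then f w * g z else 0 := by
    rw [Finset.sum_comm]
    refine Finset.sum_congr rfl fun z _ => ?_
    by_cases hB : B z
    · rw [if_pos hB, Finset.sum_mul]
      refine Finset.sum_congr rfl fun w _ => ?_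
      by_cases hE : E z w <;> simp [hB, hE]
    · simp [hB]
  have R : (∑ w ∈ s, if A w then f w else 0) * (∑ z ∈ s, if B z then g z else 0)
      = ∑ w ∈ s, ∑ z ∈ s, if A w ∧ B z then f w * g z else 0 := by
    rw [Finset.sum_mul_sum]
    refine Finset.sum_congr rfl fun w _ => Finset.sum_congr rfl fun z _ => ?_
    by_cases hA : A w <;> by_cases hB : B z <;> simp [hA, hB]
  rw [L1, L2, R, ← Finset.sum_add_distrib]
  refine Finset.sum_congr rfl fun w _ => ?_
  rw [← Finset.sum_add_distrib]
  refine Finset.sum_congr rfl fun z _ => ?_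
  rcases hde w z with ⟨hD, hE⟩ | ⟨hD, hE⟩
  · by_cases hA : A w
    · have hB : B z := h1 w z hA hD
      simp [hA, hB, hD, hE]
    · simp [hA, hE]
  · by_cases hB : B z
    · have hA : A w := h2 w z hB hE
      simp [hA, hB, hD, hE]
    · simp [hD, hB]

lemma lemA (k : ℕ) (c d : CPerm) :
    ∀ (p : ℕ × ℕ × ℕ), (∀ x ∈ c, ∀ y ∈ d, x.1 ≠ y.1) →
    ((shuffles c d).map (N' k p)).sum = N' k p c * N' k p d := by
  induction c, d using shuffles.induct with
  | case1 d =>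
    intro p _
    rw [show shuffles ([] : CPerm) d = {d} from by simp [shuffles]]
    rw [Multiset.map_singleton, Multiset.sum_singleton, N'_nil]
    by_cases h : p.1 ≤ k
    · rw [if_pos h, one_mul]
    · rw [if_neg h, zero_mul, N'_eq_zero (by omega) d]
  | case2 q cs =>
    intro p _
    rw [show shuffles (q :: cs) ([] : CPerm) = {q :: cs} from by simp [shuffles]]
    rw [Multiset.map_singleton, Multiset.sum_singleton, N'_nil]
    by_cases h : p.1 ≤ k
    · rw [if_pos h, mul_one]
    · rw [if_neg h, mul_zero, N'_eq_zero (by omega) (q :: cs)]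
  | case3 q cs r ds ih1 ih2 =>
    intro p hdisj
    have hqr : q.1 ≠ r.1 := hdisj q List.mem_cons_self r List.mem_cons_self
    have hd1 : ∀ x ∈ cs, ∀ y ∈ r :: ds, x.1 ≠ y.1 :=
      fun x hx y hy => hdisj x (List.mem_cons_of_mem q hx) y hy
    have hd2 : ∀ x ∈ q :: cs, ∀ y ∈ ds, x.1 ≠ y.1 :=
      fun x hx y hy => hdisj x hx y (List.mem_cons_of_mem r hy)
    rw [show shuffles (q :: cs) (r :: ds)
        = ((shuffles cs (r :: ds)).map (q :: ·)) + ((shuffles (q :: cs) ds).map (r :: ·))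
        from by rw [shuffles]]
    rw [Multiset.map_add, Multiset.sum_add, Multiset.map_map, Multiset.map_map]
    have e1 : ((shuffles cs (r :: ds)).map ((N' k p) ∘ (q :: ·))).sum
        = ∑ w ∈ Finset.range (k+1),
            if pLt p (w, q) then
              (Polynomial.X ^ w * N' k (w, q) cs) *
                (∑ z ∈ Finset.range (k+1),
                  if pLt (w, q) (z, r) then Polynomial.X ^ z * N' k (z, r) ds else 0)
            else 0 := by
      have hcong : ∀ e ∈ shuffles cs (r :: ds), (N' k p ∘ (q :: ·)) e
          = ∑ w ∈ Finset.range (k+1),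
              if pLt p (w, q) then Polynomial.X ^ w * N' k (w, q) e else 0 :=
        fun e _ => rfl
      rw [Multiset.map_congr rfl hcong, msum_fsum]
      refine Finset.sum_congr rfl fun w _ => ?_
      by_cases hc : pLt p (w, q)
      · simp only [if_pos hc]
        rw [Multiset.sum_map_mul_left, ih1 (w, q) hd1, ← N'_cons, mul_assoc]
      · simp [hc]
    have e2 : ((shuffles (q :: cs) ds).map ((N' k p) ∘ (r :: ·))).sum
        = ∑ z ∈ Finset.range (k+1),
            if pLt p (z, r) then
              (∑ w ∈ Finset.range (k+1),
                  if pLt (z, r) (w, q) then Polynomial.X ^ w * N' k (w, q) cs else 0) *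
                (Polynomial.X ^ z * N' k (z, r) ds)
            else 0 := by
      have hcong : ∀ e ∈ shuffles (q :: cs) ds, (N' k p ∘ (r :: ·)) e
          = ∑ z ∈ Finset.range (k+1),
              if pLt p (z, r) then Polynomial.X ^ z * N' k (z, r) e else 0 :=
        fun e _ => rfl
      rw [Multiset.map_congr rfl hcong, msum_fsum]
      refine Finset.sum_congr rfl fun z _ => ?_
      by_cases hc : pLt p (z, r)
      · simp only [if_pos hc]
        rw [Multiset.sum_map_mul_left, ih2 (z, r) hd2, ← N'_cons]
        ring
      · simp [hc]
    rw [e1, e2, N'_cons, N'_cons]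
    exact key_double (Finset.range (k+1))
      (fun w => Polynomial.X ^ w * N' k (w, q) cs)
      (fun z => Polynomial.X ^ z * N' k (z, r) ds)
      (fun w => pLt p (w, q)) (fun z => pLt p (z, r))
      (fun w z => pLt (w, q) (z, r)) (fun z w => pLt (z, r) (w, q))
      (fun w z => by
        rcases pLt_total (p := (w, q)) (q := (z, r)) hqr with h | h
        · exact Or.inl ⟨h, fun h' => pLt_asymm h h'⟩
        · exact Or.inr ⟨fun h' => pLt_asymm h h', h⟩)
      (fun w z hA hD => pLt_trans hA hD)
      (fun w z hB hE => pLt_trans hB hE)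

/-- `H n M = Σ_{0 ≤ g₁ ≤ … ≤ g_n ≤ M} x^{Σ g}`. -/
noncomputable def H : ℕ → ℕ → Polynomial ℤ
  | 0, _ => 1
  | n+1, M => ∑ u ∈ Finset.range (M+1), Polynomial.X ^ ((n+1)*u) * H n (M - u)

/-- `H` with integer second argument, zero when negative. -/
noncomputable def Hz (n : ℕ) (m : ℤ) : Polynomial ℤ := if 0 ≤ m then H n m.toNat else 0

lemma H_zero (n : ℕ) : H n 0 = 1 := by
  induction n with
  | zero => rfl
  | succ n ih => simp [H, ih]

lemma Hz_neg {n : ℕ} {m : ℤ} (h : m < 0) : Hz n m = 0 := by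
  rw [Hz, if_neg (by omega)]

lemma Hsum (n : ℕ) (m : ℤ) (M : ℕ) (hm : m ≤ (M : ℤ)) :
    ∑ u ∈ Finset.range (M+1), Polynomial.X ^ ((n+1)*u) * Hz n (m - u) = Hz (n+1) m := by
  by_cases h0 : 0 ≤ m
  · obtain ⟨m₀, rfl⟩ := Int.eq_ofNat_of_zero_le h0
    have hsub : ∑ u ∈ Finset.range (M+1), Polynomial.X ^ ((n+1)*u) * Hz n ((m₀ : ℤ) - u)
        = ∑ u ∈ Finset.range (m₀+1), Polynomial.X ^ ((n+1)*u) * Hz n ((m₀ : ℤ) - u) := by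
      refine (Finset.sum_subset (Finset.range_subset_range.mpr (by omega)) ?_).symm
      intro u hu hnu
      simp only [Finset.mem_range, not_lt] at hnu
      rw [Hz_neg (by omega), mul_zero]
    rw [hsub]
    simp only [Hz]
    rw [if_pos h0, show ((m₀:ℤ)).toNat = m₀ from by simp]
    rw [show H (n+1) m₀ = ∑ u ∈ Finset.range (m₀+1), Polynomial.X ^ ((n+1)*u) * H n (m₀ - u)
      from by rw [H]]
    refine Finset.sum_congr rfl fun u hu => ?_
    rw [Finset.mem_range] at hu
    rw [if_pos (show (0:ℤ) ≤ (m₀:ℤ) - ↑u by omega),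
      show ((m₀:ℤ) - ↑u).toNat = m₀ - u from by omega]
  · rw [Hz_neg (by omega)]
    refine Finset.sum_eq_zero fun u _ => ?_
    rw [Hz_neg (by omega), mul_zero]

/-- Generic descent statistic computed relative to a previous letter. -/
def statFrom (w0 : ℕ → ℕ) : ℕ × ℕ → CPerm → ℕ
  | _, [] => 0
  | q, r :: c => (if cLt r q then w0 (c.length + 1) else 0) + statFrom w0 r c

lemma N'_nil' (k v : ℕ) (q : ℕ × ℕ) : N' k (v, q) [] = if v ≤ k then 1 else 0 := rfl

lemma lemB (k : ℕ) (c : CPerm) : ∀ (v : ℕ) (q : ℕ × ℕ),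
    ((q :: c).map Prod.fst).Nodup →
    N' k (v, q) c = Polynomial.X ^ (c.length * v + statFrom id q c) *
      Hz c.length ((k : ℤ) - v - statFrom (fun _ => 1) q c) := by
  induction c with
  | nil =>
    intro v q _
    rw [N'_nil', show statFrom id q [] = 0 from rfl,
      show statFrom (fun _ => 1) q [] = 0 from rfl]
    simp only [List.length_nil, Nat.zero_mul, Nat.add_zero, pow_zero, one_mul,
      Nat.cast_zero, sub_zero, Hz]
    by_cases h : v ≤ k
    · rw [if_pos h, if_pos (show (0:ℤ) ≤ (k:ℤ) - ↑v by omega),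
        show H 0 (((k:ℤ) - ↑v).toNat) = (1 : Polynomial ℤ) from rfl]
    · rw [if_neg h, if_neg (show ¬ (0:ℤ) ≤ (k:ℤ) - ↑v by omega)]
  | cons r c ih =>
    intro v q hnd
    rw [List.map_cons, List.nodup_cons] at hnd
    have hqr : q.1 ≠ r.1 := fun h => hnd.1 (by rw [List.map_cons, h]; exact List.mem_cons_self)
    have hnd' : ((r :: c).map Prod.fst).Nodup := hnd.2
    obtain ⟨δ, hδ⟩ : ∃ δ, δ = if cLt r q then 1 else 0 := ⟨_, rfl⟩
    have hplt : ∀ w : ℕ, pLt (v, q) (w, r) ↔ v + δ ≤ w := by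
      intro w
      rw [show pLt (v, q) (w, r) ↔ (v < w ∨ (v = w ∧ cLt q r)) from Iff.rfl]
      by_cases hc : cLt r q
      · have h2 : ¬ cLt q r := by unfold cLt at hc ⊢; omega
        rw [hδ, if_pos hc]
        constructor
        · rintro (h | ⟨h, h'⟩)
          · omega
          · exact absurd h' h2
        · intro h; exact Or.inl (by omega)
      · have h2 : cLt q r := by unfold cLt at hc ⊢; omega
        rw [hδ, if_neg hc]
        constructor
        · rintro (h | ⟨h, _⟩) <;> omega
        · intro h
          rcases Nat.lt_or_ge v w with h' | h'
          · exact Or.inl h'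
          · exact Or.inr ⟨by omega, h2⟩
    have hstat1 : statFrom id q (r :: c) = δ * (c.length + 1) + statFrom id r c := by
      rw [show statFrom id q (r :: c)
          = (if cLt r q then (c.length + 1) else 0) + statFrom id r c from rfl, hδ]
      by_cases hc : cLt r q
      · rw [if_pos hc, if_pos hc, one_mul]
      · rw [if_neg hc, if_neg hc, zero_mul]
    have hstat2 : statFrom (fun _ => 1) q (r :: c) = δ + statFrom (fun _ => 1) r c := by
      rw [show statFrom (fun _ => 1) q (r :: c)
          = (if cLt r q then 1 else 0) + statFrom (fun _ => 1) r c from rfl, hδ]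
    rw [N'_cons, hstat1, hstat2, List.length_cons]
    have hsummand : ∀ w ∈ Finset.range (k+1),
        (if pLt (v, q) (w, r) then Polynomial.X ^ w * N' k (w, r) c else 0)
        = if v + δ ≤ w then Polynomial.X ^ (w + (c.length * w + statFrom id r c)) *
            Hz c.length ((k : ℤ) - ↑w - ↑(statFrom (fun _ => 1) r c)) else 0 := by
      intro w _
      rw [if_congr (hplt w) rfl rfl]
      by_cases hw : v + δ ≤ w
      · rw [if_pos hw, if_pos hw, ih w r hnd', ← mul_assoc, ← pow_add]
      · rw [if_neg hw, if_neg hw]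
    rw [Finset.sum_congr rfl hsummand, ← Finset.sum_filter,
      show Finset.filter (fun w => v + δ ≤ w) (Finset.range (k+1))
        = Finset.Ico (v + δ) (k+1) from by
          ext w
          simp only [Finset.mem_filter, Finset.mem_range, Finset.mem_Ico]
          omega]
    by_cases hvk : v + δ ≤ k
    · rw [Finset.sum_Ico_eq_sum_range,
        show k + 1 - (v + δ) = (k - (v + δ)) + 1 from by omega]
      have hterm : ∀ u : ℕ,
          Polynomial.X ^ ((v + δ + u) + (c.length * (v + δ + u) + statFrom id r c)) *
            Hz c.length ((k : ℤ) - ↑(v + δ + u) - ↑(statFrom (fun _ => 1) r c))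
          = Polynomial.X ^ ((c.length + 1) * v + (δ * (c.length + 1) + statFrom id r c)) *
            (Polynomial.X ^ ((c.length + 1) * u) *
              Hz c.length (((k : ℤ) - ↑v - ↑δ - ↑(statFrom (fun _ => 1) r c)) - ↑u)) := by
        intro u
        rw [← mul_assoc, ← pow_add]
        congr 2
        · ring
        · push_cast; ring
      rw [Finset.sum_congr rfl fun u _ => hterm u, ← Finset.mul_sum,
        Hsum c.length _ _ (by omega)]
      rw [show ((k : ℤ) - ↑v - ↑δ - ↑(statFrom (fun _ => 1) r c))
          = ((k:ℤ) - ↑v - ↑(δ + statFrom (fun _ => 1) r c)) from by push_cast; ring]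
    · rw [show Finset.Ico (v + δ) (k+1) = ∅ from by
          ext w
          simp only [Finset.mem_Ico, Finset.notMem_empty, iff_false]
          omega,
        Finset.sum_empty, Hz_neg (by omega), mul_zero]


lemma dstat (w0 : ℕ → ℕ) (c : CPerm) : ∀ (q : ℕ × ℕ),
    (∑ i ∈ Finset.range c.length,
      if (if i = 0 then cLt (c.getD 0 (0,0)) q
          else cLt (c.getD i (0,0)) (c.getD (i-1) (0,0)))
      then w0 (c.length - i) else 0) = statFrom w0 q c := by
  induction c with
  | nil => intro q; simp [statFrom]
  | cons r c ih =>
    intro q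
    rw [show (r :: c).length = c.length + 1 from rfl, Finset.sum_range_succ']
    rw [show statFrom w0 q (r :: c)
        = (if cLt r q then w0 (c.length + 1) else 0) + statFrom w0 r c from rfl]
    rw [add_comm (if cLt r q then w0 (c.length + 1) else 0) (statFrom w0 r c)]
    congr 1
    rw [← ih r]
    refine Finset.sum_congr rfl fun i _ => ?_
    rcases i with _ | j
    · simp
    · simp [List.getD_cons_succ, Nat.succ_sub_succ]

lemma des_eq (c : CPerm) : des c = statFrom (fun _ => 1) (0,0) c := by
  rw [des, DesSet, Finset.card_filter, ← dstat (fun _ => 1) c (0,0)]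
  refine Finset.sum_congr rfl fun i _ => ?_
  refine if_congr ?_ rfl rfl
  by_cases h : i = 0
  · rw [if_pos h, if_pos h]
    simp only [cLt]
    omega
  · rw [if_neg h, if_neg h]

lemma comaj_eq (c : CPerm) : comaj c = statFrom id (0,0) c := by
  rw [comaj, DesSet, Finset.sum_filter, ← dstat id c (0,0)]
  refine Finset.sum_congr rfl fun i _ => ?_
  refine if_congr ?_ rfl rfl
  by_cases h : i = 0
  · rw [if_pos h, if_pos h]
    simp only [cLt]
    omega
  · rw [if_neg h, if_neg h]

lemma mem_shuffles_perm {α : Type*} (c d : List α) : ∀ e ∈ shuffles c d, e.Perm (c ++ d) := by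
  induction c, d using shuffles.induct with
  | case1 d =>
    intro e he
    rw [show shuffles ([] : List α) d = {d} from by simp [shuffles],
      Multiset.mem_singleton] at he
    subst he; simp
  | case2 a as =>
    intro e he
    rw [show shuffles (a :: as) ([] : List α) = {a :: as} from by simp [shuffles],
      Multiset.mem_singleton] at he
    subst he; simp
  | case3 a as b bs ih1 ih2 =>
    intro e he
    rw [show shuffles (a :: as) (b :: bs)
        = ((shuffles as (b :: bs)).map (a :: ·)) + ((shuffles (a :: as) bs).map (b :: ·))
        from by rw [shuffles], Multiset.mem_add] at he
    rcases he with he | he <;> rw [Multiset.mem_map] at he <;> obtain ⟨e1, h1, rfl⟩ := he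
    · exact (ih1 e1 h1).cons a
    · exact ((ih2 e1 h1).cons b).trans List.perm_middle.symm

lemma sum_indicator {α : Type*} (S : Multiset α) (P : α → Prop) [DecidablePred P] :
    (S.map fun e => if P e then (1:ℤ) else 0).sum = ((S.filter P).card : ℤ) := by
  induction S using Multiset.induction with
  | empty => simp
  | cons a S ih =>
    by_cases h : P a <;> simp [Multiset.filter_cons, h, ih] <;> push_cast <;> ring

lemma N'_top (k : ℕ) (x : CPerm) (hnd : (x.map Prod.fst).Nodup) (hpos : ∀ p ∈ x, 0 < p.1) :
    N' k (0, (0,0)) x = Polynomial.X ^ comaj x * Hz x.length ((k:ℤ) - des x) := by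
  have hnd0 : (((0,0) : ℕ × ℕ) :: x).map Prod.fst |>.Nodup := by
    rw [List.map_cons, List.nodup_cons]
    refine ⟨fun h0 => ?_, hnd⟩
    rw [List.mem_map] at h0
    obtain ⟨p, hp, hp0⟩ := h0
    have := hpos p hp
    omega
  rw [lemB k x 0 (0,0) hnd0, Nat.mul_zero, Nat.zero_add, ← des_eq, ← comaj_eq]
  norm_num

noncomputable def PS (s : Multiset CPerm) : PowerSeries (Polynomial ℤ) :=
  (s.map fun e =>
    PowerSeries.C (Polynomial.X ^ comaj e : Polynomial ℤ) * PowerSeries.X ^ des e).sum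

noncomputable def Gs (n : ℕ) : PowerSeries (Polynomial ℤ) := PowerSeries.mk fun M => H n M

lemma Gs_ne_zero (n : ℕ) : Gs n ≠ 0 := by
  intro h
  have h2 := congrArg (PowerSeries.coeff 0) h
  rw [Gs, PowerSeries.coeff_mk, H_zero] at h2
  simp at h2

lemma coeff_PS_mul (s : Multiset CPerm) (n k : ℕ) :
    (PowerSeries.coeff k) (PS s * Gs n)
      = (s.map fun e => Polynomial.X ^ comaj e * Hz n ((k:ℤ) - des e)).sum := by
  rw [PS, ← Multiset.sum_map_mul_right,
    map_multiset_sum (PowerSeries.coeff k), Multiset.map_map]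
  refine congrArg Multiset.sum (Multiset.map_congr rfl fun e _ => ?_)
  simp only [Function.comp_apply]
  rw [show PowerSeries.C (Polynomial.X ^ comaj e : Polynomial ℤ) * PowerSeries.X ^ des e * Gs n
      = (PowerSeries.C (Polynomial.X ^ comaj e : Polynomial ℤ) * Gs n) * PowerSeries.X ^ des e
      from by ring,
    PowerSeries.coeff_mul_X_pow']
  by_cases h : des e ≤ k
  · rw [if_pos h, PowerSeries.coeff_C_mul, Gs, PowerSeries.coeff_mk,
      Hz, if_pos (show (0:ℤ) ≤ (k:ℤ) - ↑(des e) by omega),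
      show ((k:ℤ) - ↑(des e)).toNat = k - des e from by omega]
  · rw [if_neg h, Hz_neg (by omega), mul_zero]

lemma count_PS (s : Multiset CPerm) (d cm : ℕ) :
    ((PowerSeries.coeff d) (PS s)).coeff cm
      = (Multiset.count (d, cm) (s.map fun e => (des e, comaj e)) : ℤ) := by
  classical
  rw [PS, map_multiset_sum (PowerSeries.coeff d), Multiset.map_map]
  rw [show ((PowerSeries.coeff d) ∘ fun e : CPerm =>
      PowerSeries.C (Polynomial.X ^ comaj e : Polynomial ℤ) * PowerSeries.X ^ des e)
      = fun e : CPerm => if d = des e then Polynomial.X ^ comaj e else (0 : Polynomial ℤ)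
      from funext fun e => by
        simp only [Function.comp_apply]
        rw [PowerSeries.coeff_C_mul, PowerSeries.coeff_X_pow]
        by_cases h : d = des e <;> simp [h]]
  rw [← Polynomial.lcoeff_apply, map_multiset_sum (Polynomial.lcoeff ℤ cm),
    Multiset.map_map]
  rw [show ((Polynomial.lcoeff ℤ cm) ∘ fun e : CPerm =>
      if d = des e then Polynomial.X ^ comaj e else (0 : Polynomial ℤ))
      = fun e : CPerm => if d = des e ∧ cm = comaj e then (1:ℤ) else 0
      from funext fun e => by
        simp only [Function.comp_apply, Polynomial.lcoeff_apply]
        by_cases h1 : d = des e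
        · by_cases h2 : cm = comaj e <;> simp [h1, h2, Polynomial.coeff_X_pow]
        · simp [h1]]
  rw [sum_indicator s (fun e => d = des e ∧ cm = comaj e), Multiset.count_map]
  congr 2
  refine Multiset.filter_congr fun e _ => ?_
  rw [Prod.mk.injEq]


end DCC

/-- **Theorem.** The triple `(des, comaj, col)` of coloured permutation statistics is
shuffle compatible. -/
theorem des_comaj_col_shuffleCompatible (a b a' b' : CPerm)
    (ha : IsCPerm a) (hb : IsCPerm b) (ha' : IsCPerm a') (hb' : IsCPerm b')
    (hab : SymbolDisjoint a b) (hab' : SymbolDisjoint a' b')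
    (hla : a.length = a'.length) (hlb : b.length = b'.length)
    (hda : des a = des a') (hdb : des b = des b')
    (hca : comaj a = comaj a') (hcb : comaj b = comaj b')
    (hcola : colVec a = colVec a') (hcolb : colVec b = colVec b') :
    (shuffles a b).map (fun c => (des c, comaj c, colVec c)) =
      (shuffles a' b').map (fun c => (des c, comaj c, colVec c)) := by
  classical
  have hgen : ∀ (u v : CPerm), SymbolDisjoint u v → ∀ x ∈ u, ∀ y ∈ v, x.1 ≠ y.1 := by
    intro u v huv x hx y hy hxy
    have hx' : x.1 ∈ symbols u := by
      rw [symbols, List.mem_toFinset]; exact List.mem_map_of_mem (f := Prod.fst) hx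
    have hy' : y.1 ∈ symbols v := by
      rw [symbols, List.mem_toFinset]; exact List.mem_map_of_mem (f := Prod.fst) hy
    exact Finset.disjoint_left.mp huv hx' (hxy ▸ hy')
  have hdab := hgen a b hab
  have hdab' := hgen a' b' hab'
  have helem : ∀ (u v : CPerm), IsCPerm u → IsCPerm v → (∀ x ∈ u, ∀ y ∈ v, x.1 ≠ y.1) →
      ∀ e ∈ shuffles u v, (e.map Prod.fst).Nodup ∧ (∀ p ∈ e, 0 < p.1) ∧
        e.length = u.length + v.length ∧ colVec e = colVec (u ++ v) := by
    intro u v hu hv hd e he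
    have hperm := DCC.mem_shuffles_perm u v e he
    refine ⟨?_, ?_, ?_, ?_⟩
    · rw [(hperm.map Prod.fst).nodup_iff, List.map_append, List.nodup_append]
      refine ⟨hu.1, hv.1, fun x hxu y hxv hxy => ?_⟩
      rw [List.mem_map] at hxu hxv
      obtain ⟨p, hp, rfl⟩ := hxu
      obtain ⟨p', hp', hpp⟩ := hxv
      exact hd p hp p' hp' (hxy.trans hpp.symm)
    · intro p hp
      have hm := hperm.mem_iff.mp hp
      rw [List.mem_append] at hm
      rcases hm with h | h
      · exact hu.2 p h
      · exact hv.2 p h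
    · rw [hperm.length_eq, List.length_append]
    · funext j
      exact (hperm.map Prod.snd).count_eq j
  have hkey : ∀ k : ℕ,
      ((shuffles a b).map fun e => Polynomial.X ^ comaj e
          * DCC.Hz (a.length + b.length) ((k:ℤ) - des e)).sum
      = ((shuffles a' b').map fun e => Polynomial.X ^ comaj e
          * DCC.Hz (a.length + b.length) ((k:ℤ) - des e)).sum := by
    intro k
    have hside : ∀ (u v : CPerm), IsCPerm u → IsCPerm v →
        (∀ x ∈ u, ∀ y ∈ v, x.1 ≠ y.1) →
        ((shuffles u v).map fun e => Polynomial.X ^ comaj e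
            * DCC.Hz (u.length + v.length) ((k:ℤ) - des e)).sum
        = DCC.N' k (0,(0,0)) u * DCC.N' k (0,(0,0)) v := by
      intro u v hu hv hd
      rw [← DCC.lemA k u v (0,(0,0)) hd]
      refine congrArg Multiset.sum (Multiset.map_congr rfl fun e he => ?_)
      obtain ⟨h1, h2, h3, _⟩ := helem u v hu hv hd e he
      rw [DCC.N'_top k e h1 h2, h3]
    have h1 := hside a b ha hb hdab
    have h2 := hside a' b' ha' hb' hdab'
    rw [show a'.length + b'.length = a.length + b.length from by omega] at h2
    rw [h1, h2]
    congr 1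
    · rw [DCC.N'_top k a ha.1 ha.2, DCC.N'_top k a' ha'.1 ha'.2, hla, hda, hca]
    · rw [DCC.N'_top k b hb.1 hb.2, DCC.N'_top k b' hb'.1 hb'.2, hlb, hdb, hcb]
  have hmul : DCC.PS (shuffles a b) * DCC.Gs (a.length + b.length)
      = DCC.PS (shuffles a' b') * DCC.Gs (a.length + b.length) := by
    refine PowerSeries.ext fun k => ?_
    rw [DCC.coeff_PS_mul, DCC.coeff_PS_mul]
    exact hkey k
  have hPS : DCC.PS (shuffles a b) = DCC.PS (shuffles a' b') :=
    mul_right_cancel₀ (DCC.Gs_ne_zero _) hmul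
  have hcount : (shuffles a b).map (fun e => (des e, comaj e))
      = (shuffles a' b').map (fun e => (des e, comaj e)) := by
    refine Multiset.ext.mpr fun v => ?_
    obtain ⟨d, cm⟩ := v
    have h1 := DCC.count_PS (shuffles a b) d cm
    have h2 := DCC.count_PS (shuffles a' b') d cm
    rw [hPS] at h1
    have h3 := h1.symm.trans h2
    exact_mod_cast h3
  have hVs : ∀ e ∈ shuffles a b, colVec e = colVec (a ++ b) :=
    fun e he => (helem a b ha hb hdab e he).2.2.2
  have hVt : ∀ e ∈ shuffles a' b', colVec e = colVec (a ++ b) := by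
    intro e he
    rw [(helem a' b' ha' hb' hdab' e he).2.2.2]
    funext j
    rw [colVec, colVec, List.map_append, List.map_append,
      List.count_append, List.count_append]
    rw [show (a'.map Prod.snd).count j = (a.map Prod.snd).count j
        from (congrFun hcola j).symm,
      show (b'.map Prod.snd).count j = (b.map Prod.snd).count j
        from (congrFun hcolb j).symm]
  calc (shuffles a b).map (fun c => (des c, comaj c, colVec c))
      = (shuffles a b).map ((fun p : ℕ × ℕ => (p.1, p.2, colVec (a ++ b)))
          ∘ fun e => (des e, comaj e)) :=
        Multiset.map_congr rfl fun e he => by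
          show (des e, comaj e, colVec e) = (des e, comaj e, colVec (a ++ b))
          rw [hVs e he]
    _ = ((shuffles a b).map fun e => (des e, comaj e)).map
          (fun p : ℕ × ℕ => (p.1, p.2, colVec (a ++ b))) := (Multiset.map_map _ _ _).symm
    _ = ((shuffles a' b').map fun e => (des e, comaj e)).map
          (fun p : ℕ × ℕ => (p.1, p.2, colVec (a ++ b))) := by rw [hcount]
    _ = (shuffles a' b').map ((fun p : ℕ × ℕ => (p.1, p.2, colVec (a ++ b)))
          ∘ fun e => (des e, comaj e)) := Multiset.map_map _ _ _
    _ = (shuffles a' b').map (fun c => (des c, comaj c, colVec c)) :=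
        Multiset.map_congr rfl fun e he => by
          show (des e, comaj e, colVec (a ++ b)) = (des e, comaj e, colVec e)
          rw [hVt e he]
end
end

section
/- Fix r ≥ 1 and work in the ring of formal power series in t over the polynomial ring ℚ[p₀,…,p_{r−1},x]. For an r-coloured permutation a of length n, let Φ(a) = p^{col(a)} x^{comaj(a)} t^{des(a)} / ((1−t)(1−xt)⋯(1−xⁿt)), where p^{col(a)} = p₀^{col₀(a)}⋯p_{r−1}^{col_{r−1}(a)} and each factor 1/(1−x^i t) denotes the power series Σ_{k≥0} x^{ik} t^k. Then for all symbol-disjoint r-coloured permutations a and b, Φ(a) *_t Φ(b) = Σ_{c ∈ a⧢b} Φ(c), where *_t is the Hadamard product in t and the sum is over the multiset of shuffles. -/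
open scoped Classical

noncomputable section

/-- The polynomial ring `ℚ[p₀,p₁,…][x]` (only `p₀,…,p_{r−1}` occur for `r`-coloured
permutations); `x` is `Polynomial.X` and `p_j` is `MvPolynomial.X j`. -/
abbrev PXRing : Type := Polynomial (MvPolynomial ℕ ℚ)

/-- The monomial `p^{col(a)} = p₀^{col₀(a)} ⋯`. -/
def pMon (a : CPerm) : MvPolynomial ℕ ℚ := (a.map fun p => MvPolynomial.X p.2).prod

/-- `Φ(a) = p^{col(a)} x^{comaj(a)} t^{des(a)} / ((1−t)(1−xt)⋯(1−xⁿt))`. -/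
def Phi (a : CPerm) : PowerSeries PXRing :=
  PowerSeries.C (Polynomial.C (pMon a) * Polynomial.X ^ comaj a) *
    PowerSeries.X ^ des a *
    ∏ i ∈ Finset.range (a.length + 1), geom ((Polynomial.X : PXRing) ^ i)


-- ==================== auxiliary development ====================

lemma cLt_trans_s3 {p q r : ℕ × ℕ} (h1 : cLt p q) (h2 : cLt q r) : cLt p r := by
  unfold cLt at *; omega

lemma cLt_total_s3 {p q : ℕ × ℕ} (h : p.1 ≠ q.1) : cLt p q ∨ cLt q p := by
  unfold cLt; omega

def d0 (o : Option (ℕ × ℕ)) (e : ℕ × ℕ) : ℕ :=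
  match o with
  | none => if e.2 ≠ 0 then 1 else 0
  | some pe => if cLt e pe then 1 else 0

def cseq : CPerm → ℕ → Option (ℕ × ℕ) → ℕ → PXRing
  | [], _, _, _ => 1
  | e :: c, p, o, k =>
      ∑ v ∈ Finset.Icc (p + d0 o e) k, (Polynomial.X : PXRing) ^ v * cseq c v (some e) k

def rdes : CPerm → Option (ℕ × ℕ) → ℕ
  | [], _ => 0
  | e :: c, o => d0 o e + rdes c (some e)

def rcomaj : CPerm → Option (ℕ × ℕ) → ℕ
  | [], _ => 0
  | e :: c, o => d0 o e * (c.length + 1) + rcomaj c (some e)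

def gcond (o : Option (ℕ × ℕ)) (c : CPerm) (i : ℕ) : Prop :=
  if i = 0 then
    (match o with
     | none => (c.getD 0 (0, 0)).2 ≠ 0
     | some pe => cLt (c.getD 0 (0, 0)) pe)
  else cLt (c.getD i (0, 0)) (c.getD (i - 1) (0, 0))

lemma gcond_zero (o : Option (ℕ × ℕ)) (e : ℕ × ℕ) (c : CPerm) :
    (if gcond o (e :: c) 0 then (1:ℕ) else 0) = d0 o e := by
  cases o <;> simp [gcond, d0]

lemma gcond_succ (o : Option (ℕ × ℕ)) (e : ℕ × ℕ) (c : CPerm) (i : ℕ) :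
    gcond o (e :: c) (i + 1) ↔ gcond (some e) c i := by
  unfold gcond
  rcases i with _ | j
  · simp
  · simp [List.getD_cons_succ]

lemma rdes_eq (c : CPerm) (o : Option (ℕ × ℕ)) :
    (∑ i ∈ Finset.range c.length, if gcond o c i then 1 else 0) = rdes c o := by
  induction c generalizing o with
  | nil => simp [rdes]
  | cons e cs ih =>
    rw [List.length_cons, Finset.sum_range_succ']
    simp only [gcond_succ, gcond_zero]
    rw [ih (some e)]
    simp [rdes, Nat.add_comm]

lemma rcomaj_eq (c : CPerm) (o : Option (ℕ × ℕ)) :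
    (∑ i ∈ Finset.range c.length, if gcond o c i then c.length - i else 0) = rcomaj c o := by
  induction c generalizing o with
  | cons e cs ih =>
    rw [List.length_cons, Finset.sum_range_succ']
    have h1 : (∑ i ∈ Finset.range cs.length,
          if gcond o (e :: cs) (i+1) then cs.length + 1 - (i+1) else 0)
        = ∑ i ∈ Finset.range cs.length, if gcond (some e) cs i then cs.length - i else 0 :=
      Finset.sum_congr rfl fun i _ => if_congr (gcond_succ o e cs i) (by simp) rfl
    rw [h1, ih (some e)]
    have h0 : (if gcond o (e :: cs) 0 then cs.length + 1 - 0 else 0) = d0 o e * (cs.length + 1) := by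
      rcases o with _ | pe <;> simp only [gcond, d0, List.getD_cons_zero,
        List.length_cons, Nat.sub_zero, reduceIte] <;> split <;> simp
    rw [h0]
    simp [rcomaj, Nat.add_comm]
  | nil => simp [rcomaj]

lemma des_eq_rdes (c : CPerm) : des c = rdes c none := by
  rw [des, DesSet, Finset.card_filter, ← rdes_eq c none]
  exact Finset.sum_congr rfl fun i _ => if_congr (by unfold gcond; rfl) rfl rfl

lemma comaj_eq_rcomaj (c : CPerm) : comaj c = rcomaj c none := by
  rw [comaj, DesSet, Finset.sum_filter, ← rcomaj_eq c none]
  exact Finset.sum_congr rfl fun i _ => if_congr (by unfold gcond; rfl) rfl rfl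

def Hc (n K : ℕ) : PXRing :=
  PowerSeries.coeff K (∏ i ∈ Finset.range n, geom ((Polynomial.X : PXRing) ^ i))

def Hz (n : ℕ) (K : ℤ) : PXRing := if 0 ≤ K then Hc n K.toNat else 0

lemma Hz_one {K : ℤ} (h : 0 ≤ K) : Hz 1 K = 1 := by
  rw [Hz, if_pos h, Hc, Finset.prod_range_one, pow_zero, geom, PowerSeries.coeff_mk, one_pow]

lemma Hz_neg {n : ℕ} {K : ℤ} (h : K < 0) : Hz n K = 0 := by
  rw [Hz, if_neg (by omega)]

lemma Hz_succ (n : ℕ) (K : ℤ) (T : ℕ) (hKT : K ≤ T) :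
    Hz (n + 1) K
      = ∑ t ∈ Finset.range (T + 1), ((Polynomial.X : PXRing) ^ n) ^ t * Hz n (K - ↑t) := by
  by_cases hK : 0 ≤ K
  · obtain ⟨KN, rfl⟩ := Int.eq_ofNat_of_zero_le hK
    have hKN : KN ≤ T := by exact_mod_cast hKT
    have key : Hc (n+1) KN
        = ∑ t ∈ Finset.range (KN+1), ((Polynomial.X : PXRing)^n)^t * Hc n (KN - t) := by
      rw [Hc, Finset.prod_range_succ, mul_comm, PowerSeries.coeff_mul,
        Finset.Nat.sum_antidiagonal_eq_sum_range_succ_mk]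
      exact Finset.sum_congr rfl fun t ht => by rw [geom, PowerSeries.coeff_mk]; rfl
    have h2 : ∀ t ∈ Finset.range (KN+1), ((Polynomial.X : PXRing)^n)^t * Hc n (KN - t)
        = ((Polynomial.X : PXRing)^n)^t * Hz n ((KN:ℤ) - t) := by
      intro t ht
      have ht' : t ≤ KN := by simpa [Nat.lt_succ_iff] using ht
      have hto : ((KN:ℤ) - t).toNat = KN - t := by omega
      rw [Hz, if_pos (by omega : (0:ℤ) ≤ (KN:ℤ) - t), hto]
    have hsub : Finset.range (KN+1) ⊆ Finset.range (T+1) := Finset.range_subset_range.2 (by omega)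
    rw [Hz, if_pos hK, Int.toNat_natCast, key, Finset.sum_congr rfl h2,
      Finset.sum_subset hsub]
    intro t ht hnt
    simp only [Finset.mem_range] at ht hnt
    rw [Hz_neg (by omega), mul_zero]
  · push_neg at hK
    rw [Hz_neg hK]
    exact (Finset.sum_eq_zero fun t _ => by rw [Hz_neg (by omega), mul_zero]).symm

lemma cseq_formula : ∀ (c : CPerm) (p : ℕ) (o : Option (ℕ × ℕ)) (k : ℕ), p ≤ k →
    cseq c p o k = (Polynomial.X : PXRing) ^ (p * c.length + rcomaj c o) *
      Hz (c.length + 1) ((k : ℤ) - p - rdes c o) := by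
  intro c
  induction c with
  | nil =>
    intro p o k hpk
    have h0 : (0:ℤ) ≤ (k:ℤ) - (p:ℤ) := by push_cast; omega
    simp only [cseq, rcomaj, rdes, List.length_nil, Nat.mul_zero, Nat.add_zero, pow_zero,
      one_mul, Nat.cast_zero, sub_zero, Nat.zero_add]
    rw [Hz_one h0]
  | cons e cs ih =>
    intro p o k hpk
    set n := cs.length with hn
    set m := p + d0 o e with hm
    set C := rcomaj cs (some e) with hC
    set d := rdes cs (some e) with hd
    have hgoalr : rcomaj (e :: cs) o = d0 o e * (n+1) + C := rfl
    have hgoald : rdes (e :: cs) o = d0 o e + d := rfl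
    by_cases hmk : m ≤ k
    · have hsum : cseq (e :: cs) p o k
          = ∑ v ∈ Finset.Icc m k, (Polynomial.X : PXRing)^v * cseq cs v (some e) k := rfl
      rw [hsum, ← Finset.Ico_add_one_right_eq_Icc, Finset.sum_Ico_eq_sum_range]
      have hterm : ∀ t ∈ Finset.range (k + 1 - m),
          (Polynomial.X : PXRing)^(m+t) * cseq cs (m+t) (some e) k
          = (Polynomial.X : PXRing)^(m*(n+1) + C) *
            (((Polynomial.X : PXRing)^(n+1))^t * Hz (n+1) (((k:ℤ) - ↑m - ↑d) - ↑t)) := by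
        intro t ht
        have htk : m + t ≤ k := by simp only [Finset.mem_range] at ht; omega
        have he : (m+t) + ((m+t)*n + C) = m*(n+1) + C + (n+1)*t := by ring
        have he2 : ((k:ℤ) - ↑(m+t) - ↑d) = ((k:ℤ) - ↑m - ↑d) - ↑t := by push_cast; ring
        rw [ih (m+t) (some e) k htk, ← mul_assoc, ← pow_add, he, he2,
          pow_add, mul_assoc, pow_mul]
      rw [Finset.sum_congr rfl hterm, ← Finset.mul_sum]
      have hr : k + 1 - m = (k - m) + 1 := by omega
      rw [hr, ← Hz_succ (n+1) ((k:ℤ) - ↑m - ↑d) (k - m) (by push_cast; omega)]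
      have e1 : m*(n+1) + C = p * (e :: cs).length + rcomaj (e :: cs) o := by
        rw [hgoalr]
        simp only [List.length_cons, hm]
        ring
      have e2 : ((k:ℤ) - ↑m - ↑d) = (k:ℤ) - ↑p - ↑(rdes (e :: cs) o) := by
        rw [hgoald]
        push_cast [hm]
        ring
      rw [e1, e2]
      rfl
    · simp only [cseq]
      rw [Finset.Icc_eq_empty (by omega), Finset.sum_empty]
      rw [Hz_neg (by rw [hgoald]; push_cast; omega), mul_zero]

lemma coeff_Phi (c : CPerm) (k : ℕ) :
    PowerSeries.coeff k (Phi c) = Polynomial.C (pMon c) * cseq c 0 none k := by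
  have hL : (PowerSeries.coeff k) (Phi c)
      = Polynomial.C (pMon c) *
        ((Polynomial.X : PXRing)^(comaj c) * Hz (c.length+1) ((k:ℤ) - des c)) := by
    rw [Phi, mul_assoc, PowerSeries.coeff_C_mul]
    by_cases h : des c ≤ k
    · have hk : k = (k - des c) + des c := by omega
      have h1 : (PowerSeries.coeff k) (PowerSeries.X ^ des c *
          ∏ i ∈ Finset.range (c.length+1), geom ((Polynomial.X:PXRing)^i))
          = Hc (c.length+1) (k - des c) := by
        conv_lhs => rw [hk]
        rw [PowerSeries.coeff_X_pow_mul]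
        rfl
      have hto : ((k:ℤ) - des c).toNat = k - des c := by omega
      rw [h1, Hz, if_pos (by omega : (0:ℤ) ≤ (k:ℤ) - des c), hto]
      ring
    · have h1 : (PowerSeries.coeff k) (PowerSeries.X ^ des c *
          ∏ i ∈ Finset.range (c.length+1), geom ((Polynomial.X:PXRing)^i)) = 0 := by
        rw [PowerSeries.coeff_mul]
        apply Finset.sum_eq_zero
        intro q hq
        have hq1 : q.1 + q.2 = k := Finset.HasAntidiagonal.mem_antidiagonal.mp hq
        rw [PowerSeries.coeff_X_pow, if_neg (by omega), zero_mul]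
      rw [h1, Hz_neg (by omega), mul_zero, mul_zero, mul_zero]
  rw [hL, cseq_formula c 0 none k (Nat.zero_le k), ← des_eq_rdes, ← comaj_eq_rcomaj]
  have e1 : (0 * c.length + comaj c) = comaj c := by omega
  have e2 : ((k:ℤ) - ((0:ℕ):ℤ) - (des c:ℤ)) = (k:ℤ) - des c := by push_cast; ring
  rw [e1, e2]

lemma cLt_asymm_s3 {p q : ℕ × ℕ} (h : cLt p q) : ¬ cLt q p := by
  unfold cLt at *; omega

lemma d0_none_bound {e f : ℕ × ℕ} : d0 none f ≤ d0 none e + d0 (some e) f := by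
  simp only [d0]
  by_cases hf : f.2 ≠ 0
  · by_cases he : e.2 ≠ 0
    · simp [hf, he]
    · have hc : cLt f e := Or.inl (by omega)
      simp [hf, hc]
  · simp [hf]

lemma d0_some_bound {pe e f : ℕ × ℕ} (hepe : e.1 ≠ pe.1) :
    d0 (some pe) f ≤ d0 (some pe) e + d0 (some e) f := by
  simp only [d0]
  by_cases hf : cLt f pe
  · by_cases he : cLt e pe
    · simp [hf, he]
    · have h1 : cLt pe e := (cLt_total_s3 hepe).resolve_left he
      have h2 : cLt f e := cLt_trans_s3 hf h1
      simp [hf, h2]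
  · simp [hf]

lemma d0_bound {o : Option (ℕ × ℕ)} {e f : ℕ × ℕ}
    (hoe : ∀ pe ∈ o, e.1 ≠ pe.1) : d0 o f ≤ d0 o e + d0 (some e) f := by
  rcases o with _ | pe
  · exact d0_none_bound
  · exact d0_some_bound (hoe pe rfl)

lemma d0_flip {e f : ℕ × ℕ} (h : e.1 ≠ f.1) : d0 (some e) f + d0 (some f) e = 1 := by
  simp only [d0]
  rcases cLt_total_s3 h with h1 | h1
  · simp [h1, cLt_asymm_s3 h1]
  · simp [h1, cLt_asymm_s3 h1]

lemma msum_fsum {ι : Type*} (s : Multiset ι) (t : Finset ℕ) (g : ℕ → ι → PXRing) :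
    (s.map (fun c => ∑ v ∈ t, g v c)).sum = ∑ v ∈ t, (s.map (g v)).sum := by
  induction s using Multiset.induction_on with
  | empty => simp
  | cons x s ih => simp [ih, Finset.sum_add_distrib]

lemma rect_split (A B d1 d2 k : ℕ) (h12 : d1 + d2 = 1) (hB : B ≤ A + d1) (hA : A ≤ B + d2)
    (G : ℕ → ℕ → PXRing) :
    (∑ v ∈ Finset.Icc A k, ∑ u ∈ Finset.Icc (v + d1) k, G v u)
      + (∑ u ∈ Finset.Icc B k, ∑ v ∈ Finset.Icc (u + d2) k, G v u)
      = ∑ v ∈ Finset.Icc A k, ∑ u ∈ Finset.Icc B k, G v u := by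
  have e1 : ∀ v ∈ Finset.Icc A k, (∑ u ∈ Finset.Icc (v + d1) k, G v u)
      = ∑ u ∈ Finset.Icc B k, if v + d1 ≤ u then G v u else 0 := by
    intro v hv
    rw [← Finset.sum_filter]
    refine Finset.sum_congr ?_ (fun _ _ => rfl)
    ext u
    have hv' := (Finset.mem_Icc.mp hv).1
    simp only [Finset.mem_Icc, Finset.mem_filter]
    omega
  have e2 : ∀ u ∈ Finset.Icc B k, (∑ v ∈ Finset.Icc (u + d2) k, G v u)
      = ∑ v ∈ Finset.Icc A k, if u + d2 ≤ v then G v u else 0 := by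
    intro u hu
    rw [← Finset.sum_filter]
    refine Finset.sum_congr ?_ (fun _ _ => rfl)
    ext v
    have hu' := (Finset.mem_Icc.mp hu).1
    simp only [Finset.mem_Icc, Finset.mem_filter]
    omega
  have e3 : (∑ u ∈ Finset.Icc B k, ∑ v ∈ Finset.Icc A k, if u + d2 ≤ v then G v u else 0)
      = ∑ v ∈ Finset.Icc A k, ∑ u ∈ Finset.Icc B k, if u + d2 ≤ v then G v u else 0 :=
    Finset.sum_comm
  rw [Finset.sum_congr rfl e1, Finset.sum_congr rfl e2, e3, ← Finset.sum_add_distrib]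
  refine Finset.sum_congr rfl fun v hv => ?_
  rw [← Finset.sum_add_distrib]
  refine Finset.sum_congr rfl fun u hu => ?_
  by_cases h : v + d1 ≤ u
  · rw [if_pos h, if_neg (by omega), add_zero]
  · rw [if_neg h, if_pos (by omega), zero_add]

lemma shuffle_cseq : ∀ (a b : CPerm) (p : ℕ) (o : Option (ℕ × ℕ)) (k : ℕ),
    (((a ++ b).map Prod.fst).Nodup) →
    (∀ pe ∈ o, ∀ q ∈ a ++ b, q.1 ≠ pe.1) →
    ((shuffles a b).map (fun c => cseq c p o k)).sum = cseq a p o k * cseq b p o k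
  | [], b, p, o, k, hnd, ho => by
      simp [shuffles, cseq]
  | e :: as, [], p, o, k, hnd, ho => by
      simp [shuffles, cseq]
  | e :: as, f :: bs, p, o, k, hnd, ho => by
      -- unpack the distinctness hypotheses
      have hnd' : (e.1 :: ((as ++ f :: bs).map Prod.fst)).Nodup := by simpa using hnd
      obtain ⟨hem, hnd1⟩ := List.nodup_cons.mp hnd'
      have ho1 : ∀ q ∈ as ++ f :: bs, q.1 ≠ e.1 := by
        intro q hq hq1
        exact hem (hq1 ▸ List.mem_map_of_mem (f := Prod.fst) hq)
      have hef : e.1 ≠ f.1 := by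
        intro h
        exact hem (h ▸ List.mem_map_of_mem (f := Prod.fst) (by simp : f ∈ as ++ f :: bs))
      have hnd1' : (as.map Prod.fst ++ f.1 :: bs.map Prod.fst).Nodup := by
        simpa using hnd1
      have hfas : f.1 ∉ as.map Prod.fst := by
        intro h
        exact List.disjoint_of_nodup_append hnd1' h (by simp)
      have hfbs : f.1 ∉ bs.map Prod.fst :=
        (List.nodup_cons.mp (List.Nodup.of_append_right hnd1')).1
      have hnd2 : (((e :: as) ++ bs).map Prod.fst).Nodup := by
        have hsub : ((e :: as) ++ bs).Sublist ((e :: as) ++ f :: bs) :=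
          List.Sublist.append_left (List.sublist_cons_self f bs) (e :: as)
        exact hnd.sublist (hsub.map Prod.fst)
      have ho2 : ∀ q ∈ (e :: as) ++ bs, q.1 ≠ f.1 := by
        intro q hq hq1
        rcases List.mem_append.mp hq with hq | hq
        · rcases List.mem_cons.mp hq with rfl | hq
          · exact hef hq1
          · exact hfas (hq1 ▸ List.mem_map_of_mem (f := Prod.fst) hq)
        · exact hfbs (hq1 ▸ List.mem_map_of_mem (f := Prod.fst) hq)
      have hoe : ∀ pe ∈ o, e.1 ≠ pe.1 := fun pe hpe => ho pe hpe e (by simp)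
      have hof : ∀ pe ∈ o, f.1 ≠ pe.1 := fun pe hpe => ho pe hpe f (by simp)
      have ho1' : ∀ pe ∈ (some e : Option (ℕ × ℕ)), ∀ q ∈ as ++ f :: bs, q.1 ≠ pe.1 := by
        intro pe hpe
        rw [Option.mem_some_iff] at hpe
        subst hpe
        exact ho1
      have ho2' : ∀ pe ∈ (some f : Option (ℕ × ℕ)), ∀ q ∈ (e :: as) ++ bs, q.1 ≠ pe.1 := by
        intro pe hpe
        rw [Option.mem_some_iff] at hpe
        subst hpe
        exact ho2
      have IH1 : ∀ v, ((shuffles as (f :: bs)).map (fun c => cseq c v (some e) k)).sum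
          = cseq as v (some e) k * cseq (f :: bs) v (some e) k :=
        fun v => shuffle_cseq as (f :: bs) v (some e) k (by simpa using hnd1) ho1'
      have IH2 : ∀ u, ((shuffles (e :: as) bs).map (fun c => cseq c u (some f) k)).sum
          = cseq (e :: as) u (some f) k * cseq bs u (some f) k :=
        fun u => shuffle_cseq (e :: as) bs u (some f) k hnd2 ho2'
      -- notation
      set A := p + d0 o e with hA
      set B := p + d0 o f with hB
      set d1 := d0 (some e) f with hd1
      set d2 := d0 (some f) e with hd2
      have h12 : d1 + d2 = 1 := d0_flip hef
      have hBA : B ≤ A + d1 := by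
        have := d0_bound hoe (f := f)
        omega
      have hAB : A ≤ B + d2 := by
        have := d0_bound hof (f := e)
        omega
      -- unfold the shuffles and compute
      rw [shuffles, Multiset.map_add, Multiset.sum_add, Multiset.map_map, Multiset.map_map]
      have hc1 : ((fun c => cseq c p o k) ∘ (e :: ·))
          = fun c' => ∑ v ∈ Finset.Icc A k, (Polynomial.X : PXRing) ^ v * cseq c' v (some e) k :=
        rfl
      have hc2 : ((fun c => cseq c p o k) ∘ (f :: ·))
          = fun c' => ∑ u ∈ Finset.Icc B k, (Polynomial.X : PXRing) ^ u * cseq c' u (some f) k :=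
        rfl
      rw [hc1, hc2, msum_fsum, msum_fsum]
      simp only [Multiset.sum_map_mul_left]
      have hIH1 : ∀ v ∈ Finset.Icc A k,
          (Polynomial.X : PXRing) ^ v * ((shuffles as (f :: bs)).map
            (fun c' => cseq c' v (some e) k)).sum
          = ∑ u ∈ Finset.Icc (v + d1) k,
              ((Polynomial.X : PXRing) ^ v * cseq as v (some e) k) *
                ((Polynomial.X : PXRing) ^ u * cseq bs u (some f) k) := by
        intro v _
        rw [IH1 v]
        have hfb : cseq (f :: bs) v (some e) k
            = ∑ u ∈ Finset.Icc (v + d1) k, (Polynomial.X : PXRing) ^ u * cseq bs u (some f) k :=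
          rfl
        rw [hfb, ← mul_assoc, Finset.mul_sum]
      have hIH2 : ∀ u ∈ Finset.Icc B k,
          (Polynomial.X : PXRing) ^ u * ((shuffles (e :: as) bs).map
            (fun c' => cseq c' u (some f) k)).sum
          = ∑ v ∈ Finset.Icc (u + d2) k,
              ((Polynomial.X : PXRing) ^ v * cseq as v (some e) k) *
                ((Polynomial.X : PXRing) ^ u * cseq bs u (some f) k) := by
        intro u _
        rw [IH2 u]
        have hea : cseq (e :: as) u (some f) k
            = ∑ v ∈ Finset.Icc (u + d2) k, (Polynomial.X : PXRing) ^ v * cseq as v (some e) k :=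
          rfl
        rw [hea, Finset.sum_mul, Finset.mul_sum]
        exact Finset.sum_congr rfl fun v _ => by ring
      rw [Finset.sum_congr rfl hIH1, Finset.sum_congr rfl hIH2,
        rect_split A B d1 d2 k h12 hBA hAB]
      have hL : cseq (e :: as) p o k
          = ∑ v ∈ Finset.Icc A k, (Polynomial.X : PXRing) ^ v * cseq as v (some e) k := rfl
      have hR : cseq (f :: bs) p o k
          = ∑ u ∈ Finset.Icc B k, (Polynomial.X : PXRing) ^ u * cseq bs u (some f) k := rfl
      rw [hL, hR, Finset.sum_mul_sum]
  termination_by a b => a.length + b.length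

lemma shuffles_perm {α : Type*} : ∀ (a b : List α), ∀ c ∈ shuffles a b, c.Perm (a ++ b) := by
  intro a
  induction a with
  | nil =>
    intro b c hc
    simp only [shuffles, Multiset.mem_singleton] at hc
    subst hc
    simp
  | cons e as iha =>
    intro b
    induction b with
    | nil =>
      intro c hc
      simp only [shuffles, Multiset.mem_singleton] at hc
      subst hc
      simp
    | cons f bs ihb =>
      intro c hc
      rw [shuffles, Multiset.mem_add] at hc
      rcases hc with hc | hc <;> rw [Multiset.mem_map] at hc <;> obtain ⟨c', hc', rfl⟩ := hc
      · exact (iha (f :: bs) c' hc').cons e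
      · exact ((ihb c' hc').cons f).trans List.perm_middle.symm

lemma pMon_shuffle {a b : CPerm} {c : CPerm} (hc : c ∈ shuffles a b) :
    pMon c = pMon a * pMon b := by
  have h := shuffles_perm a b c hc
  unfold pMon
  rw [← List.prod_append, ← List.map_append]
  exact List.Perm.prod_eq (h.map _)

/-- **Theorem.** For symbol-disjoint `r`-coloured permutations `a, b`:
`Φ(a) *_t Φ(b) = Σ_{c ∈ a⧢b} Φ(c)`. -/
theorem hadamard_Phi_eq_sum_shuffles (r : ℕ) (hr : 1 ≤ r) (a b : CPerm)
    (ha : IsCPerm a) (hb : IsCPerm b)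
    (hra : RColoured r a) (hrb : RColoured r b)
    (hd : SymbolDisjoint a b) :
    hadamard (Phi a) (Phi b) = ((shuffles a b).map Phi).sum := by
  refine PowerSeries.ext fun k => ?_
  rw [hadamard, PowerSeries.coeff_mk]
  have hs : (PowerSeries.coeff k) ((shuffles a b).map Phi).sum
      = ((shuffles a b).map (fun c => (PowerSeries.coeff k) (Phi c))).sum := by
    rw [map_multiset_sum, Multiset.map_map]
    rfl
  rw [hs]
  have hnd : ((a ++ b).map Prod.fst).Nodup := by
    rw [List.map_append]
    refine List.Nodup.append ha.1 hb.1 ?_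
    rw [SymbolDisjoint, symbols, symbols] at hd
    exact List.disjoint_toFinset_iff_disjoint.mp hd
  have key := shuffle_cseq a b 0 none k hnd (by simp)
  calc (PowerSeries.coeff k) (Phi a) * (PowerSeries.coeff k) (Phi b)
      = Polynomial.C (pMon a * pMon b) * (cseq a 0 none k * cseq b 0 none k) := by
        rw [coeff_Phi, coeff_Phi, map_mul]
        ring
    _ = Polynomial.C (pMon a * pMon b) * ((shuffles a b).map (fun c => cseq c 0 none k)).sum := by
        rw [key]
    _ = ((shuffles a b).map (fun c => Polynomial.C (pMon a * pMon b) * cseq c 0 none k)).sum := by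
        rw [Multiset.sum_map_mul_left]
    _ = ((shuffles a b).map (fun c => (PowerSeries.coeff k) (Phi c))).sum := by
        congr 1
        refine Multiset.map_congr rfl ?_
        intro c hc
        rw [coeff_Phi, pMon_shuffle hc]
end
end

section
/- The coloured descent set sDes is shuffle compatible: if a, b are symbol-disjoint coloured permutations and a', b' are symbol-disjoint coloured permutations with sDes(a) = sDes(a') and sDes(b) = sDes(b'), then the multisets {sDes(c) : c ∈ a⧢b} and {sDes(c') : c' ∈ a'⧢b'} are equal. -/
open scoped Classical

noncomputable section

/-- The coloured descent set `sDes(a)` of a coloured permutation: the set of pairs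
`(i, γ_i)` (with `i` a 1-indexed position) such that either `i = n`, or `i < n` and
`γ_i ≠ γ_{i+1}`, or `γ_i = γ_{i+1}` and `σ_i > σ_{i+1}`. -/
def sDes (a : CPerm) : Finset (ℕ × ℕ) :=
  ((Finset.range a.length).filter fun i =>
      i + 1 = a.length ∨ (a.getD i (0, 0)).2 ≠ (a.getD (i + 1) (0, 0)).2 ∨
        ((a.getD i (0, 0)).2 = (a.getD (i + 1) (0, 0)).2 ∧
          (a.getD (i + 1) (0, 0)).1 < (a.getD i (0, 0)).1)).image
    fun i => (i + 1, (a.getD i (0, 0)).2)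
namespace SDesAux

/-- Descent relation between adjacent coloured letters. -/
def dsc (p q : ℕ × ℕ) : Prop := p.2 ≠ q.2 ∨ (p.2 = q.2 ∧ q.1 < p.1)

instance : DecidableRel dsc := fun p q => by unfold dsc; infer_instance

def bump : List (ℕ × ℕ) → List (ℕ × ℕ)
  | [] => []
  | (l, c) :: t => (l + 1, c) :: t

/-- Maximal ascending constant-colour run decomposition: list of (length, colour). -/
def runs : CPerm → List (ℕ × ℕ)
  | [] => []
  | [p] => [(1, p.2)]
  | p :: q :: c => if dsc p q then (1, p.2) :: runs (q :: c) else bump (runs (q :: c))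

def shiftF (l : ℕ) (S : Finset (ℕ × ℕ)) : Finset (ℕ × ℕ) :=
  S.image fun p => (p.1 + l, p.2)

def sDesR : List (ℕ × ℕ) → Finset (ℕ × ℕ)
  | [] => ∅
  | (l, c) :: t => insert (l, c) (shiftF l (sDesR t))

lemma mem_shiftF {l : ℕ} {S : Finset (ℕ × ℕ)} {x : ℕ × ℕ} :
    x ∈ shiftF l S ↔ ∃ y ∈ S, (y.1 + l, y.2) = x := by
  simp [shiftF]

lemma mem_sDes {c : CPerm} {x : ℕ × ℕ} :
    x ∈ sDes c ↔ ∃ i < c.length,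
      (i + 1 = c.length ∨ dsc (c.getD i (0,0)) (c.getD (i+1) (0,0))) ∧
        x = (i + 1, (c.getD i (0,0)).2) := by
  simp only [sDes, Finset.mem_image, Finset.mem_filter, Finset.mem_range, dsc]
  constructor
  · rintro ⟨i, ⟨hi, h⟩, rfl⟩; exact ⟨i, hi, h, rfl⟩
  · rintro ⟨i, hi, h, rfl⟩; exact ⟨i, ⟨hi, h⟩, rfl⟩

lemma sDes_nil : sDes ([] : CPerm) = ∅ := by simp [sDes]

lemma sDes_singleton (p : ℕ × ℕ) : sDes [p] = {(1, p.2)} := by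
  ext x
  simp [mem_sDes]

lemma sDes_cons_cons (p q : ℕ × ℕ) (c : CPerm) :
    sDes (p :: q :: c) =
      if dsc p q then insert (1, p.2) (shiftF 1 (sDes (q :: c)))
      else shiftF 1 (sDes (q :: c)) := by
  have hlen : (p :: q :: c).length = (q :: c).length + 1 := by simp
  ext x
  constructor
  · intro hx
    rcases mem_sDes.1 hx with ⟨i, hi, h, rfl⟩
    match i with
    | 0 =>
      have h0 : dsc p q := by
        rcases h with h | h
        · simp only [List.length_cons] at h; omega
        · simpa using h
      rw [if_pos h0]
      simp
    | (j+1) =>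
      have hj : j < (q :: c).length := by simpa using hi
      have hcond : (j + 1 = (q :: c).length ∨
          dsc ((q :: c).getD j (0,0)) ((q :: c).getD (j+1) (0,0))) := by
        rcases h with h | h
        · left; omega
        · right; simpa using h
      have hmem : (j + 1, ((q :: c).getD j (0,0)).2) ∈ sDes (q :: c) :=
        mem_sDes.2 ⟨j, hj, hcond, rfl⟩
      have hsh : (j + 1 + 1, ((p :: q :: c).getD (j+1) (0,0)).2) ∈ shiftF 1 (sDes (q :: c)) :=
        mem_shiftF.2 ⟨_, hmem, by simp⟩
      by_cases hd : dsc p q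
      · rw [if_pos hd]; exact Finset.mem_insert_of_mem hsh
      · rw [if_neg hd]; exact hsh
  · intro hx
    by_cases hd : dsc p q
    · rw [if_pos hd] at hx
      rcases Finset.mem_insert.1 hx with h | h
      · subst h
        exact mem_sDes.2 ⟨0, by simp, Or.inr (by simpa using hd), by simp⟩
      · rcases mem_shiftF.1 h with ⟨y, hy, rfl⟩
        rcases mem_sDes.1 hy with ⟨j, hj, hcond, rfl⟩
        refine mem_sDes.2 ⟨j + 1, by simpa using Nat.succ_lt_succ hj, ?_, by simp⟩
        rcases hcond with h | h
        · left; omega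
        · right; simpa using h
    · rw [if_neg hd] at hx
      rcases mem_shiftF.1 hx with ⟨y, hy, rfl⟩
      rcases mem_sDes.1 hy with ⟨j, hj, hcond, rfl⟩
      refine mem_sDes.2 ⟨j + 1, by simpa using Nat.succ_lt_succ hj, ?_, by simp⟩
      rcases hcond with h | h
      · left; omega
      · right; simpa using h

end SDesAux
namespace SDesAux

lemma shiftF_insert (l : ℕ) (y : ℕ × ℕ) (S : Finset (ℕ × ℕ)) :
    shiftF l (insert y S) = insert (y.1 + l, y.2) (shiftF l S) := by
  simp [shiftF, Finset.image_insert]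

lemma shiftF_shiftF (m l : ℕ) (S : Finset (ℕ × ℕ)) :
    shiftF m (shiftF l S) = shiftF (l + m) S := by
  simp only [shiftF, Finset.image_image]
  apply Finset.image_congr
  intro x _
  simp [Nat.add_assoc]

lemma runs_shape (x : ℕ × ℕ) (a : CPerm) :
    ∃ l t, runs (x :: a) = (l + 1, x.2) :: t := by
  induction a generalizing x with
  | nil => exact ⟨0, [], rfl⟩
  | cons y c ih =>
    by_cases hd : dsc x y
    · exact ⟨0, runs (y :: c), by simp [runs, hd]⟩
    · rcases ih y with ⟨l, t, ht⟩
      have hcol : x.2 = y.2 := by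
        by_contra hne
        exact hd (Or.inl hne)
      refine ⟨l + 1, t, ?_⟩
      simp [runs, hd, ht, bump, hcol]

lemma runs_nil_iff {a : CPerm} : runs a = [] ↔ a = [] := by
  cases a with
  | nil => simp [runs]
  | cons x a =>
    rcases runs_shape x a with ⟨l, t, ht⟩
    simp [ht]

theorem sDes_eq_runs : ∀ c : CPerm, sDes c = sDesR (runs c)
  | [] => by simp [runs, sDesR, sDes_nil]
  | [p] => by simp [runs, sDesR, sDes_singleton, shiftF]
  | p :: q :: c => by
    have IH := sDes_eq_runs (q :: c)
    rw [sDes_cons_cons]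
    by_cases hd : dsc p q
    · rw [if_pos hd]
      simp only [runs, if_pos hd, sDesR, IH]
    · rw [if_neg hd]
      rcases runs_shape q c with ⟨l, t, ht⟩
      simp only [runs, if_neg hd, ht, bump, sDesR, IH]
      rw [shiftF_insert, shiftF_shiftF]

def Valid (q : List (ℕ × ℕ)) : Prop := ∀ p ∈ q, 1 ≤ p.1

lemma runs_valid : ∀ c : CPerm, Valid (runs c)
  | [] => by simp [runs, Valid]
  | [p] => by simp [runs, Valid]
  | p :: q :: c => by
    have IH := runs_valid (q :: c)
    by_cases hd : dsc p q
    · simp only [runs, if_pos hd]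
      intro x hx
      rcases List.mem_cons.1 hx with rfl | hx
      · simp
      · exact IH x hx
    · simp only [runs, if_neg hd]
      rcases runs_shape q c with ⟨l, t, ht⟩
      rw [ht]
      intro x hx
      rcases List.mem_cons.1 hx with rfl | hx
      · simp [bump]
      · exact IH x (ht ▸ List.mem_cons_of_mem _ (by simpa [bump] using hx))

lemma sDesR_mem_pos : ∀ {t : List (ℕ × ℕ)}, Valid t → ∀ x ∈ sDesR t, 1 ≤ x.1
  | [], _, x, hx => by simp [sDesR] at hx
  | (l, c) :: t, hv, x, hx => by
    rcases Finset.mem_insert.1 hx with rfl | hx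
    · exact hv (l, c) (by simp)
    · rcases mem_shiftF.1 hx with ⟨y, hy, rfl⟩
      have := hv (l, c) (by simp)
      simp only at this ⊢
      omega

lemma shiftF_inj {l : ℕ} {S S' : Finset (ℕ × ℕ)} (h : shiftF l S = shiftF l S') : S = S' := by
  have hinj : Function.Injective (fun p : ℕ × ℕ => (p.1 + l, p.2)) := by
    rintro ⟨a, b⟩ ⟨c, d⟩ h
    simp only [Prod.mk.injEq] at h
    exact Prod.ext (by omega) h.2
  exact Finset.image_injective hinj h

lemma sDesR_inj : ∀ {t t' : List (ℕ × ℕ)}, Valid t → Valid t' →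
    sDesR t = sDesR t' → t = t'
  | [], [], _, _, _ => rfl
  | [], (l', c') :: t', _, _, h => by
    simp only [sDesR] at h
    exact absurd h.symm (Finset.insert_ne_empty _ _)
  | (l, c) :: t, [], _, _, h => by
    simp only [sDesR] at h
    exact absurd h (Finset.insert_ne_empty _ _)
  | (l, c) :: t, (l', c') :: t', hv, hv', h => by
    have hvt : Valid t := fun p hp => hv p (List.mem_cons_of_mem _ hp)
    have hvt' : Valid t' := fun p hp => hv' p (List.mem_cons_of_mem _ hp)
    have hX : ∀ x ∈ shiftF l (sDesR t), l + 1 ≤ x.1 := by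
      rintro x hx
      rcases mem_shiftF.1 hx with ⟨y, hy, rfl⟩
      have := sDesR_mem_pos hvt y hy
      simp only
      omega
    have hX' : ∀ x ∈ shiftF l' (sDesR t'), l' + 1 ≤ x.1 := by
      rintro x hx
      rcases mem_shiftF.1 hx with ⟨y, hy, rfl⟩
      have := sDesR_mem_pos hvt' y hy
      simp only
      omega
    simp only [sDesR] at h
    have h1 : ((l, c) : ℕ × ℕ) ∈ insert (l', c') (shiftF l' (sDesR t')) := by
      rw [← h]; exact Finset.mem_insert_self _ _
    have h2 : ((l', c') : ℕ × ℕ) ∈ insert (l, c) (shiftF l (sDesR t)) := by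
      rw [h]; exact Finset.mem_insert_self _ _
    have heq : ((l, c) : ℕ × ℕ) = (l', c') := by
      rcases Finset.mem_insert.1 h1 with h1 | h1
      · exact h1
      · rcases Finset.mem_insert.1 h2 with h2 | h2
        · exact h2.symm
        · have := hX _ h2
          have := hX' _ h1
          simp only at *
          omega
    obtain ⟨rfl, rfl⟩ : l = l' ∧ c = c' := by
      simpa [Prod.ext_iff] using heq
    have hni : ((l, c) : ℕ × ℕ) ∉ shiftF l (sDesR t) := fun hc => by
      have := hX _ hc; simp at this
    have hni' : ((l, c) : ℕ × ℕ) ∉ shiftF l (sDesR t') := fun hc => by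
      have := hX' _ hc; simp at this
    have hSS : shiftF l (sDesR t) = shiftF l (sDesR t') := by
      have := congrArg (fun S => Finset.erase S (l, c)) h
      simpa [Finset.erase_insert hni, Finset.erase_insert hni'] using this
    have := sDesR_inj hvt hvt' (shiftF_inj hSS)
    rw [this]

lemma runs_eq_of_sDes_eq {a a' : CPerm} (h : sDes a = sDes a') : runs a = runs a' :=
  sDesR_inj (runs_valid a) (runs_valid a')
    (by rw [← sDes_eq_runs, ← sDes_eq_runs, h])

end SDesAux
namespace SDesAux

/-- Ascending constant-colour run, all entries above `lo`. -/
def ARun (col : ℕ) : ℕ → CPerm → Prop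
  | _, [] => True
  | lo, x :: u => x.2 = col ∧ lo < x.1 ∧ ARun col x.1 u

/-- Block-fitting predicate: `c` decomposes into ascending constant-colour
blocks prescribed by `q`, current block having lower bound `lo`. -/
def FitsLo : ℕ → List (ℕ × ℕ) → CPerm → Prop
  | _, [], c => c = []
  | _, (0, _) :: q, c => FitsLo 0 q c
  | _, (_+1, _) :: _, [] => False
  | lo, (l+1, col) :: q, x :: c => x.2 = col ∧ lo < x.1 ∧ FitsLo x.1 ((l, col) :: q) c
termination_by lo q c => (q.map Prod.fst).sum + q.length + c.length
decreasing_by all_goals first | (simp; omega) | simp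

lemma fitsLo_zero (lo col : ℕ) (q : List (ℕ × ℕ)) (c : CPerm) :
    FitsLo lo ((0, col) :: q) c = FitsLo 0 q c := by
  simp [FitsLo]

lemma fitsLo_succ_nil (lo l col : ℕ) (q : List (ℕ × ℕ)) :
    FitsLo lo ((l+1, col) :: q) [] = False := by
  simp [FitsLo]

lemma fitsLo_succ_cons (lo l col : ℕ) (q : List (ℕ × ℕ)) (x : ℕ × ℕ) (c : CPerm) :
    FitsLo lo ((l+1, col) :: q) (x :: c) =
      (x.2 = col ∧ lo < x.1 ∧ FitsLo x.1 ((l, col) :: q) c) := by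
  simp [FitsLo]

lemma fitsLo_block : ∀ (m : ℕ) (col lo : ℕ) (q : List (ℕ × ℕ)) (c : CPerm),
    FitsLo lo ((m, col) :: q) c ↔
      m ≤ c.length ∧ ARun col lo (c.take m) ∧ FitsLo 0 q (c.drop m)
  | 0, col, lo, q, c => by simp [fitsLo_zero, ARun]
  | (m+1), col, lo, q, [] => by simp [fitsLo_succ_nil]
  | (m+1), col, lo, q, x :: c => by
    rw [fitsLo_succ_cons]
    rw [fitsLo_block m col x.1 q c]
    simp only [List.take_succ_cons, List.drop_succ_cons, List.length_cons, ARun]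
    constructor
    · rintro ⟨h1, h2, h3, h4, h5⟩; exact ⟨by omega, ⟨h1, h2, h4⟩, h5⟩
    · rintro ⟨h1, ⟨h2, h3, h4⟩, h5⟩; exact ⟨h2, h3, by omega, h4, h5⟩

/- shuffles basics -/
lemma shuffles_nil_left (b : CPerm) : shuffles [] b = {b} := by
  rw [shuffles]

lemma shuffles_nil_right (a : CPerm) : shuffles a [] = {a} := by
  cases a <;> rw [shuffles]

lemma shuffles_cons_cons (x y : ℕ × ℕ) (as bs : CPerm) :
    shuffles (x :: as) (y :: bs) =
      ((shuffles as (y :: bs)).map (x :: ·)) + ((shuffles (x :: as) bs).map (y :: ·)) := by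
  rw [shuffles]

lemma perm_of_mem_shuffles : ∀ (a b : CPerm), ∀ c ∈ shuffles a b, c.Perm (a ++ b)
  | [], b, c, hc => by
    rw [shuffles_nil_left] at hc
    simp only [Multiset.mem_singleton] at hc
    simp [hc]
  | x :: as, [], c, hc => by
    rw [shuffles_nil_right] at hc
    simp only [Multiset.mem_singleton] at hc
    simp [hc]
  | x :: as, y :: bs, c, hc => by
    rw [shuffles_cons_cons] at hc
    rcases Multiset.mem_add.1 hc with hc | hc
    · rcases Multiset.mem_map.1 hc with ⟨c', hc', rfl⟩
      have := perm_of_mem_shuffles as (y :: bs) c' hc'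
      simpa using this.cons x
    · rcases Multiset.mem_map.1 hc with ⟨c', hc', rfl⟩
      have h := (perm_of_mem_shuffles (x :: as) bs c' hc').cons y
      refine h.trans ?_
      exact (List.perm_middle).symm
termination_by a b => a.length + b.length
decreasing_by all_goals first | (simp; omega) | simp

lemma length_of_mem_shuffles {a b c : CPerm} (h : c ∈ shuffles a b) :
    c.length = a.length + b.length := by
  have := (perm_of_mem_shuffles a b c h).length_eq
  simpa using this

/-- indicator with a fixed (classical) decision procedure -/
noncomputable def ind (P : Prop) : ℕ := if P then 1 else 0

lemma ind_of {P : Prop} (h : P) : ind P = 1 := by simp [ind, h]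

lemma ind_not {P : Prop} (h : ¬ P) : ind P = 0 := by simp [ind, h]

lemma ind_congr {P Q : Prop} (h : P ↔ Q) : ind P = ind Q := by
  by_cases hP : P
  · rw [ind_of hP, ind_of (h.1 hP)]
  · rw [ind_not hP, ind_not (fun hq => hP (h.2 hq))]

lemma ind_mul (P Q : Prop) : ind (P ∧ Q) = ind P * ind Q := by
  by_cases hP : P <;> by_cases hQ : Q
  · rw [ind_of (⟨hP, hQ⟩ : P ∧ Q), ind_of hP, ind_of hQ]
  · rw [ind_not (fun h => hQ h.2), ind_not hQ, mul_zero]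
  · rw [ind_not (fun h => hP h.1), ind_not hP, zero_mul]
  · rw [ind_not (fun h => hP h.1), ind_not hP, zero_mul]

lemma ind_le_one (P : Prop) : ind P ≤ 1 := by
  by_cases hP : P
  · rw [ind_of hP]
  · rw [ind_not hP]; omega

/- counting -/
noncomputable def cntP (p : CPerm → Prop) (M : Multiset CPerm) : ℕ :=
  Multiset.countP p M

lemma cntP_singleton (p : CPerm → Prop) (c : CPerm) :
    cntP p {c} = ind (p c) := by
  rw [cntP, show ({c} : Multiset CPerm) = c ::ₘ 0 from rfl, Multiset.countP_cons, ind]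
  simp

lemma cntP_add (p : CPerm → Prop) (M N : Multiset CPerm) :
    cntP p (M + N) = cntP p M + cntP p N := by
  simp [cntP, Multiset.countP_add]

lemma cntP_map (p : CPerm → Prop) (f : CPerm → CPerm) (M : Multiset CPerm) :
    cntP p (M.map f) = cntP (fun c => p (f c)) M := by
  rw [cntP, cntP, Multiset.countP_map, Multiset.countP_eq_card_filter]

lemma cntP_congr {p q : CPerm → Prop} (M : Multiset CPerm)
    (h : ∀ c ∈ M, p c ↔ q c) : cntP p M = cntP q M := by
  unfold cntP
  apply Multiset.countP_congr rfl
  intro c hc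
  simp [h c hc]

lemma cntP_const_and (P : Prop) (p : CPerm → Prop) (M : Multiset CPerm) :
    cntP (fun c => P ∧ p c) M = ind P * cntP p M := by
  by_cases hP : P
  · rw [ind_of hP, one_mul]
    exact cntP_congr M (fun c _ => by simp [hP])
  · rw [ind_not hP, zero_mul]
    unfold cntP
    exact (@Multiset.countP_eq_zero CPerm (fun c => P ∧ p c)
      (fun a => Classical.propDecidable _) M).2 (fun a _ h => hP h.1)

end SDesAux
namespace SDesAux

noncomputable def AInd (col lo : ℕ) (a : CPerm) (j : ℕ) : ℕ :=
  ind (j ≤ a.length ∧ ARun col lo (a.take j))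

lemma AInd_zero (col lo : ℕ) (a : CPerm) : AInd col lo a 0 = 1 := by
  rw [AInd, ind_of ⟨Nat.zero_le _, trivial⟩]

lemma AInd_nil_succ (col lo k : ℕ) : AInd col lo [] (k+1) = 0 := by
  rw [AInd, ind_not]
  rintro ⟨h, -⟩
  simp at h

lemma AInd_cons_succ (col lo k : ℕ) (x : ℕ × ℕ) (as : CPerm) :
    AInd col lo (x :: as) (k+1) =
      ind (x.2 = col ∧ lo < x.1) * AInd col x.1 as k := by
  rw [AInd, AInd, ← ind_mul]
  apply ind_congr
  simp only [List.take_succ_cons, List.length_cons, ARun]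
  constructor
  · rintro ⟨h1, h2, h3, h4⟩; exact ⟨⟨h2, h3⟩, by omega, h4⟩
  · rintro ⟨⟨h2, h3⟩, h1, h4⟩; exact ⟨by omega, h2, h3, h4⟩

lemma ind_cross (x2 y2 : Prop) (lo xv yv : ℕ) (hne : xv ≠ yv) :
    ind (x2 ∧ lo < xv) * ind (y2 ∧ lo < yv)
    = ind (x2 ∧ lo < xv) * ind (y2 ∧ xv < yv)
    + ind (y2 ∧ lo < yv) * ind (x2 ∧ yv < xv) := by
  unfold ind
  by_cases hx2 : x2 <;> by_cases hy2 : y2 <;> simp [hx2, hy2] <;> split_ifs <;> omega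

lemma ind_block (m col lo : ℕ) (q : List (ℕ × ℕ)) (c : CPerm) :
    ind (FitsLo lo ((m, col) :: q) c) =
      AInd col lo c m * ind (FitsLo 0 q (c.drop m)) := by
  rw [AInd, ← ind_mul]
  apply ind_congr
  rw [fitsLo_block]
  tauto

lemma keyInd (x y : ℕ × ℕ) (hxy : x.1 ≠ y.1) (as bs : CPerm) (lo col l j : ℕ)
    (hj : j ≤ l + 1) (N : ℕ) :
    AInd col lo (x :: as) j * AInd col lo (y :: bs) (l + 1 - j) * N =
      ind (1 ≤ j) *
          (ind (x.2 = col ∧ lo < x.1) *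
            (AInd col x.1 as (j-1) * (AInd col x.1 (y :: bs) (l + 1 - j) * N)))
      + ind (j ≤ l) *
          (ind (y.2 = col ∧ lo < y.1) *
            (AInd col y.1 (x :: as) j * (AInd col y.1 bs (l - j) * N))) := by
  match j with
  | 0 =>
    rw [ind_not (by omega), ind_of (Nat.zero_le l)]
    have h1 : l + 1 - 0 = l + 1 := by omega
    have h2 : l - 0 = l := by omega
    rw [h1, h2, AInd_cons_succ]
    simp only [AInd_zero]
    ring
  | (k+1) =>
    rw [ind_of (by omega : 1 ≤ k + 1)]
    have hk1 : k + 1 - 1 = k := by omega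
    rw [hk1, AInd_cons_succ]
    by_cases hkl : k + 1 ≤ l
    · rw [ind_of hkl]
      have h1 : l + 1 - (k+1) = (l - (k+1)) + 1 := by omega
      rw [h1, AInd_cons_succ, AInd_cons_succ, AInd_cons_succ]
      have hc := ind_cross (x.2 = col) (y.2 = col) lo x.1 y.1 hxy
      set A := AInd col x.1 as k with hA
      set B := AInd col y.1 bs (l - (k+1)) with hB
      set X := ind (x.2 = col ∧ lo < x.1) with hX
      set Y := ind (y.2 = col ∧ lo < y.1) with hY
      set Yx := ind (y.2 = col ∧ x.1 < y.1) with hYx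
      set Xy := ind (x.2 = col ∧ y.1 < x.1) with hXy
      calc X * A * (Y * B) * N = (X * Y) * (A * B * N) := by ring
        _ = (X * Yx + Y * Xy) * (A * B * N) := by rw [hc]
        _ = 1 * (X * (A * (Yx * B * N))) + 1 * (Y * (Xy * A * (B * N))) := by ring
    · rw [ind_not hkl]
      have h1 : l + 1 - (k+1) = 0 := by omega
      rw [h1, AInd_zero, AInd_zero]
      ring

lemma symbols_cons (x : ℕ × ℕ) (a : CPerm) :
    symbols (x :: a) = insert x.1 (symbols a) := by
  simp [symbols]

lemma disjoint_tail_left {x : ℕ × ℕ} {a b : CPerm}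
    (h : Disjoint (symbols (x :: a)) (symbols b)) : Disjoint (symbols a) (symbols b) := by
  rw [symbols_cons] at h
  exact h.mono_left (Finset.subset_insert _ _)

lemma disjoint_tail_right {y : ℕ × ℕ} {a b : CPerm}
    (h : Disjoint (symbols a) (symbols (y :: b))) : Disjoint (symbols a) (symbols b) := by
  rw [symbols_cons] at h
  exact h.mono_right (Finset.subset_insert _ _)

lemma head_ne_of_disjoint {x y : ℕ × ℕ} {as bs : CPerm}
    (h : Disjoint (symbols (x :: as)) (symbols (y :: bs))) : x.1 ≠ y.1 := by
  intro he
  have hx : x.1 ∈ symbols (x :: as) := by rw [symbols_cons]; exact Finset.mem_insert_self _ _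
  have hy : x.1 ∈ symbols (y :: bs) := by
    rw [symbols_cons, he]; exact Finset.mem_insert_self _ _
  exact Finset.disjoint_left.1 h hx hy

end SDesAux
namespace SDesAux

lemma keyStep (x y : ℕ × ℕ) (hne : x.1 ≠ y.1) (as bs : CPerm) (lo col l j : ℕ)
    (hj : j ≤ l + 1) (q : List (ℕ × ℕ)) :
    AInd col lo (x :: as) j * AInd col lo (y :: bs) (l + 1 - j) *
      cntP (FitsLo 0 q) (shuffles ((x :: as).drop j) ((y :: bs).drop (l + 1 - j)))
    = ind (1 ≤ j) * (ind (x.2 = col ∧ lo < x.1) *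
        (AInd col x.1 as (j-1) * (AInd col x.1 (y :: bs) (l + 1 - j) *
          cntP (FitsLo 0 q) (shuffles (as.drop (j-1)) ((y :: bs).drop (l + 1 - j))))))
    + ind (j ≤ l) * (ind (y.2 = col ∧ lo < y.1) *
        (AInd col y.1 (x :: as) j * (AInd col y.1 bs (l - j) *
          cntP (FitsLo 0 q) (shuffles ((x :: as).drop j) (bs.drop (l - j)))))) := by
  match j with
  | 0 =>
    rw [ind_not (by omega : ¬ (1 ≤ 0)), ind_of (Nat.zero_le l)]
    rw [Nat.sub_zero, Nat.sub_zero, List.drop_zero, List.drop_zero, List.drop_succ_cons,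
      AInd_cons_succ]
    simp only [AInd_zero]
    ring
  | (k+1) =>
    rw [ind_of (by omega : 1 ≤ k + 1), Nat.succ_sub_one, List.drop_succ_cons]
    by_cases hkl : k + 1 ≤ l
    · rw [ind_of hkl]
      have h1 : l + 1 - (k+1) = (l - (k+1)) + 1 := by omega
      rw [h1, List.drop_succ_cons, AInd_cons_succ, AInd_cons_succ, AInd_cons_succ,
        AInd_cons_succ]
      have hc := ind_cross (x.2 = col) (y.2 = col) lo x.1 y.1 hne
      set A := AInd col x.1 as k with hA
      set B := AInd col y.1 bs (l - (k+1)) with hB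
      set N := cntP (FitsLo 0 q) (shuffles (as.drop k) (bs.drop (l - (k+1)))) with hN
      set X := ind (x.2 = col ∧ lo < x.1) with hX
      set Y := ind (y.2 = col ∧ lo < y.1) with hY
      set Yx := ind (y.2 = col ∧ x.1 < y.1) with hYx
      set Xy := ind (x.2 = col ∧ y.1 < x.1) with hXy
      calc X * A * (Y * B) * N = (X * Y) * (A * B * N) := by ring
        _ = (X * Yx + Y * Xy) * (A * B * N) := by rw [hc]
        _ = 1 * (X * (A * (Yx * B * N))) + 1 * (Y * (Xy * A * (B * N))) := by ring
    · rw [ind_not hkl]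
      have h0 : l + 1 - (k+1) = 0 := by omega
      rw [h0]
      simp only [AInd_zero, List.drop_zero]
      rw [AInd_cons_succ]
      ring

lemma claim (col : ℕ) (q : List (ℕ × ℕ)) :
    ∀ (l : ℕ) (a b : CPerm) (lo : ℕ), Disjoint (symbols a) (symbols b) →
    cntP (FitsLo lo ((l, col) :: q)) (shuffles a b) =
      ∑ j ∈ Finset.range (l + 1),
        AInd col lo a j * AInd col lo b (l - j) *
          cntP (FitsLo 0 q) (shuffles (a.drop j) (b.drop (l - j))) := by
  intro l
  induction l with
  | zero =>
    intro a b lo _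
    rw [Finset.sum_range_one, Nat.sub_zero, AInd_zero, AInd_zero, List.drop_zero,
      List.drop_zero, one_mul, one_mul]
    exact cntP_congr _ (fun c _ => by rw [fitsLo_zero])
  | succ l IH =>
    intro a b lo hdisj
    cases a with
    | nil =>
      rw [shuffles_nil_left, cntP_singleton, ind_block]
      rw [Finset.sum_eq_single 0 ?h1 ?h2]
      · rw [Nat.sub_zero, AInd_zero, one_mul, List.drop_zero, shuffles_nil_left,
          cntP_singleton]
      case h1 =>
        intro j _ hj0
        obtain ⟨k, rfl⟩ : ∃ k, j = k + 1 := ⟨j - 1, by omega⟩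
        rw [AInd_nil_succ, zero_mul, zero_mul]
      case h2 =>
        intro h
        exact absurd (Finset.mem_range.2 (by omega)) h
    | cons x as =>
      cases b with
      | nil =>
        rw [shuffles_nil_right, cntP_singleton, ind_block]
        rw [Finset.sum_eq_single (l+1) ?h1 ?h2]
        · rw [Nat.sub_self, AInd_zero, mul_one, List.drop_zero, shuffles_nil_right,
            cntP_singleton]
        case h1 =>
          intro j hj hj0
          have : l + 1 - j = (l - j) + 1 := by
            have := Finset.mem_range.1 hj; omega
          rw [this, AInd_nil_succ, mul_zero, zero_mul]
        case h2 =>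
          intro h
          exact absurd (Finset.mem_range.2 (by omega)) h
      | cons y bs =>
        have hne : x.1 ≠ y.1 := head_ne_of_disjoint hdisj
        rw [shuffles_cons_cons, cntP_add, cntP_map, cntP_map]
        have hx : cntP (fun c => FitsLo lo ((l+1, col) :: q) (x :: c)) (shuffles as (y :: bs))
            = ind (x.2 = col ∧ lo < x.1) *
                cntP (FitsLo x.1 ((l, col) :: q)) (shuffles as (y :: bs)) := by
          rw [← cntP_const_and]
          exact cntP_congr _ (fun c _ => by rw [fitsLo_succ_cons]; tauto)
        have hy : cntP (fun c => FitsLo lo ((l+1, col) :: q) (y :: c)) (shuffles (x :: as) bs)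
            = ind (y.2 = col ∧ lo < y.1) *
                cntP (FitsLo y.1 ((l, col) :: q)) (shuffles (x :: as) bs) := by
          rw [← cntP_const_and]
          exact cntP_congr _ (fun c _ => by rw [fitsLo_succ_cons]; tauto)
        rw [hx, hy, IH as (y :: bs) x.1 (disjoint_tail_left hdisj),
          IH (x :: as) bs y.1 (disjoint_tail_right hdisj)]
        rw [Finset.mul_sum, Finset.mul_sum]
        have hkey : ∀ j ∈ Finset.range (l + 2),
            AInd col lo (x :: as) j * AInd col lo (y :: bs) (l + 1 - j) *
              cntP (FitsLo 0 q) (shuffles ((x :: as).drop j) ((y :: bs).drop (l + 1 - j)))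
            = (fun j => ind (1 ≤ j) * (ind (x.2 = col ∧ lo < x.1) *
                (AInd col x.1 as (j-1) * (AInd col x.1 (y :: bs) (l + 1 - j) *
                  cntP (FitsLo 0 q) (shuffles (as.drop (j-1)) ((y :: bs).drop (l + 1 - j))))))) j
              + (fun j => ind (j ≤ l) * (ind (y.2 = col ∧ lo < y.1) *
                (AInd col y.1 (x :: as) j * (AInd col y.1 bs (l - j) *
                  cntP (FitsLo 0 q) (shuffles ((x :: as).drop j) (bs.drop (l - j))))))) j := by
          intro j hj
          exact keyStep x y hne as bs lo col l j (by have := Finset.mem_range.1 hj; omega) q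
        rw [Finset.sum_congr rfl hkey, Finset.sum_add_distrib]
        congr 1
        · conv_rhs => rw [Finset.sum_range_succ']
          rw [ind_not (by omega : ¬ (1 ≤ 0)), zero_mul, add_zero]
          apply Finset.sum_congr rfl
          intro j hj
          rw [ind_of (by omega : 1 ≤ j + 1), Nat.succ_sub_one,
            (by omega : l + 1 - (j + 1) = l - j), one_mul]
          ring
        · conv_rhs => rw [Finset.sum_range_succ]
          rw [ind_not (by omega : ¬ (l + 1 ≤ l)), zero_mul, add_zero]
          apply Finset.sum_congr rfl
          intro j hj
          rw [ind_of (by have := Finset.mem_range.1 hj; omega : j ≤ l), one_mul]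
          ring

end SDesAux
namespace SDesAux

def Pos (a : CPerm) : Prop := ∀ p ∈ a, 0 < p.1
def Nod (a : CPerm) : Prop := (a.map Prod.fst).Nodup

lemma not_dsc_iff {p q : ℕ × ℕ} : ¬ dsc p q ↔ (p.2 = q.2 ∧ p.1 ≤ q.1) := by
  unfold dsc
  constructor
  · intro h
    by_cases hc : p.2 = q.2
    · refine ⟨hc, ?_⟩
      by_contra hlt
      exact h (Or.inr ⟨hc, by omega⟩)
    · exact absurd (Or.inl hc) h
  · rintro ⟨h1, h2⟩ (h | ⟨-, h⟩)
    · exact h h1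
    · omega

lemma sum_runs : ∀ a : CPerm, ((runs a).map Prod.fst).sum = a.length
  | [] => by simp [runs]
  | [p] => by simp [runs]
  | p :: q :: c => by
    have IH := sum_runs (q :: c)
    by_cases hd : dsc p q
    · simp only [runs, if_pos hd, List.map_cons, List.sum_cons, IH]
      simp only [List.length_cons]
      omega
    · rcases runs_shape q c with ⟨L, T, hT⟩
      simp only [runs, if_neg hd, hT, bump, List.map_cons, List.sum_cons]
      rw [hT] at IH
      simp only [List.map_cons, List.sum_cons] at IH
      simp only [List.length_cons] at IH ⊢
      omega

lemma length_eq_of_runs_eq {a a' : CPerm} (h : runs a = runs a') : a.length = a'.length := by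
  rw [← sum_runs a, ← sum_runs a', h]

lemma ARun_take_iff : ∀ (a' : CPerm) (x : ℕ × ℕ) (lo col j : ℕ),
    Nod (x :: a') → j ≤ a'.length →
    (ARun col lo ((x :: a').take (j+1)) ↔
      (lo < x.1 ∧ ∃ l1 t, runs (x :: a') = (l1, col) :: t ∧ j + 1 ≤ l1))
  | [], x, lo, col, j, hnd, hj => by
    have hj0 : j = 0 := by simpa using hj
    subst hj0
    simp only [List.take_succ_cons, List.take_zero, ARun, runs]
    constructor
    · rintro ⟨h1, h2, -⟩
      exact ⟨h2, 1, [], by rw [h1], le_refl 1⟩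
    · rintro ⟨h1, l1, t, he, hl⟩
      simp only [List.cons.injEq, Prod.mk.injEq] at he
      exact ⟨he.1.2, h1, trivial⟩
  | y :: c, x, lo, col, j, hnd, hj => by
    match j with
    | 0 =>
      simp only [List.take_succ_cons, List.take_zero, ARun]
      rcases runs_shape x (y :: c) with ⟨L, T, hT⟩
      rw [hT]
      constructor
      · rintro ⟨h1, h2, -⟩
        exact ⟨h2, L + 1, T, by rw [h1], by omega⟩
      · rintro ⟨h1, l1, t, he, -⟩
        simp only [List.cons.injEq, Prod.mk.injEq] at he
        exact ⟨he.1.2, h1, trivial⟩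
    | (m+1) =>
      have hnd' : Nod (y :: c) := by
        simp only [Nod, List.map_cons] at hnd ⊢
        exact hnd.of_cons
      have hxy : x.1 ≠ y.1 := by
        simp only [Nod, List.map_cons, List.nodup_cons] at hnd
        intro he
        exact hnd.1 (he ▸ List.mem_cons_self)
      have hm : m ≤ c.length := by simpa using hj
      have IH := ARun_take_iff c y x.1 col m hnd' hm
      have hunf : ARun col lo ((x :: y :: c).take (m+2)) ↔
          (x.2 = col ∧ lo < x.1 ∧ ARun col x.1 ((y :: c).take (m+1))) := by
        simp only [List.take_succ_cons, ARun]
      rw [hunf, IH]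
      by_cases hd : dsc x y
      · have hruns : runs (x :: y :: c) = (1, x.2) :: runs (y :: c) := by
          simp [runs, hd]
        rcases runs_shape y c with ⟨L, T, hT⟩
        constructor
        · rintro ⟨h1, h2, hlt, l1, t, he, hl⟩
          exfalso
          rw [hT] at he
          simp only [List.cons.injEq, Prod.mk.injEq] at he
          have hcol : x.2 = y.2 := by rw [h1, ← he.1.2]
          rcases hd with hd | ⟨-, hd⟩
          · exact hd hcol
          · omega
        · rintro ⟨h1, l1, t, he, hl⟩
          rw [hruns] at he
          simp only [List.cons.injEq, Prod.mk.injEq] at he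
          omega
      · have hcol : x.2 = y.2 := (not_dsc_iff.1 hd).1
        have hlt : x.1 < y.1 := lt_of_le_of_ne (not_dsc_iff.1 hd).2 hxy
        rcases runs_shape y c with ⟨L, T, hT⟩
        have hruns : runs (x :: y :: c) = (L + 2, y.2) :: T := by
          simp only [runs, if_neg hd, hT, bump]
        rw [hruns]
        constructor
        · rintro ⟨h1, h2, -, l1, t, he, hl⟩
          rw [hT] at he
          simp only [List.cons.injEq, Prod.mk.injEq] at he
          refine ⟨h2, L + 2, T, ?_, by omega⟩
          rw [← he.1.2]
        · rintro ⟨h1, l1, t, he, hl⟩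
          simp only [List.cons.injEq, Prod.mk.injEq] at he
          refine ⟨by rw [hcol, he.1.2], h1, hlt, L + 1, T, ?_, by omega⟩
          rw [hT, he.1.2]

lemma runs_drop : ∀ (a : CPerm) (j l1 col : ℕ) (t : List (ℕ × ℕ)),
    runs a = (l1, col) :: t → 0 < j → j ≤ l1 →
    runs (a.drop j) = if j = l1 then t else (l1 - j, col) :: t
  | [], j, l1, col, t, he, _, _ => by simp [runs] at he
  | [x], j, l1, col, t, he, hj0, hjl => by
    simp only [runs, List.cons.injEq, Prod.mk.injEq] at he
    obtain ⟨⟨h1, h2⟩, h3⟩ := he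
    have : j = 1 := by omega
    subst this
    rw [if_pos (by omega)]
    simp [runs, ← h3]
  | x :: y :: c, j, l1, col, t, he, hj0, hjl => by
    by_cases hd : dsc x y
    · rw [show runs (x :: y :: c) = (1, x.2) :: runs (y :: c) by simp [runs, hd]] at he
      simp only [List.cons.injEq, Prod.mk.injEq] at he
      have hj1 : j = 1 := by omega
      subst hj1
      rw [if_pos (by omega)]
      rw [List.drop_one]
      simpa using he.2
    · rcases runs_shape y c with ⟨L, T, hT⟩
      rw [show runs (x :: y :: c) = (L + 2, y.2) :: T by
        simp only [runs, if_neg hd, hT, bump]] at he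
      simp only [List.cons.injEq, Prod.mk.injEq] at he
      obtain ⟨⟨hl1, hcol⟩, ht⟩ := he
      match j with
      | 1 =>
        rw [if_neg (by omega)]
        rw [List.drop_one, List.tail_cons, hT, hcol, ht]
        simp only [List.cons.injEq, Prod.mk.injEq]
        exact ⟨⟨by omega, trivial⟩, trivial⟩
      | (m+2) =>
        have hrec := runs_drop (y :: c) (m+1) (L+1) y.2 T hT (by omega) (by omega)
        have hdrop : (x :: y :: c).drop (m+2) = (y :: c).drop (m+1) := rfl
        rw [hdrop, hrec]
        by_cases hm : m + 1 = L + 1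
        · rw [if_pos hm, if_pos (show m + 2 = l1 by omega), ht]
        · rw [if_neg hm, if_neg (show ¬ (m + 2 = l1) by omega), ht, hcol]
          simp only [List.cons.injEq, Prod.mk.injEq]
          exact ⟨⟨by omega, trivial⟩, trivial⟩

end SDesAux
namespace SDesAux

lemma AInd_ne_zero {col lo : ℕ} {a : CPerm} {j : ℕ} (h : AInd col lo a j ≠ 0) :
    j ≤ a.length ∧ ARun col lo (a.take j) := by
  by_contra hc
  exact h (by rw [AInd, ind_not hc])

lemma pos_drop {a : CPerm} (j : ℕ) (h : Pos a) : Pos (a.drop j) :=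
  fun p hp => h p (List.mem_of_mem_drop hp)

lemma nod_drop {a : CPerm} (j : ℕ) (h : Nod a) : Nod (a.drop j) := by
  rw [Nod, List.map_drop]
  exact (List.drop_sublist _ _).nodup h

lemma symbols_drop (j : ℕ) (a : CPerm) : symbols (a.drop j) ⊆ symbols a := by
  intro s hs
  simp only [symbols, List.mem_toFinset, List.mem_map] at hs ⊢
  rcases hs with ⟨p, hp, rfl⟩
  exact ⟨p, List.mem_of_mem_drop hp, rfl⟩

lemma disjoint_drop {a b : CPerm} (j k : ℕ) (h : Disjoint (symbols a) (symbols b)) :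
    Disjoint (symbols (a.drop j)) (symbols (b.drop k)) :=
  (h.mono_left (symbols_drop j a)).mono_right (symbols_drop k b)

lemma cntP_nil_pred (a b : CPerm) :
    cntP (fun c => c = []) (shuffles a b) = ind (a = [] ∧ b = []) := by
  cases a with
  | nil =>
    rw [shuffles_nil_left, cntP_singleton]
    apply ind_congr
    constructor
    · intro h; exact ⟨rfl, h⟩
    · rintro ⟨-, h⟩; exact h
  | cons x as =>
    rw [ind_not (fun h => by cases h.1)]
    unfold cntP
    exact (@Multiset.countP_eq_zero CPerm (fun c => c = [])
      (fun c => Classical.propDecidable _) _).2 (fun c hc hce => by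
        have := length_of_mem_shuffles hc
        rw [hce] at this
        simp only [List.length_cons, List.length_nil] at this
        omega)

lemma AInd_cond_mp {a a' : CPerm} (col m : ℕ) (hpa' : Pos a') (hna : Nod a) (hna' : Nod a')
    (hr : runs a = runs a')
    (h : m + 1 ≤ a.length ∧ ARun col 0 (a.take (m+1))) :
    m + 1 ≤ a'.length ∧ ARun col 0 (a'.take (m+1)) := by
  cases a with
  | nil => simp at h
  | cons x as =>
    cases a' with
    | nil =>
      exfalso
      rcases runs_shape x as with ⟨L, T, hT⟩
      rw [hT, show runs ([] : CPerm) = [] from rfl] at hr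
      cases hr
    | cons x' as' =>
      have hlen : (x :: as).length = (x' :: as').length := length_eq_of_runs_eq hr
      have h1 := h.1
      simp only [List.length_cons] at hlen h1
      obtain ⟨-, l1, t, he, hl⟩ :=
        (ARun_take_iff as x 0 col m hna (by omega)).1 h.2
      refine ⟨by simp only [List.length_cons]; omega, ?_⟩
      exact (ARun_take_iff as' x' 0 col m hna' (by omega)).2
        ⟨hpa' x' (List.mem_cons_self), l1, t, hr.symm.trans he, hl⟩

lemma AInd_det {a a' : CPerm} (col j : ℕ) (hpa : Pos a) (hpa' : Pos a')
    (hna : Nod a) (hna' : Nod a') (hr : runs a = runs a') :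
    AInd col 0 a j = AInd col 0 a' j := by
  match j with
  | 0 => rw [AInd_zero, AInd_zero]
  | (m+1) =>
    rw [AInd, AInd]
    exact ind_congr ⟨AInd_cond_mp col m hpa' hna hna' hr,
      AInd_cond_mp col m hpa hna' hna hr.symm⟩

lemma runs_drop_det {a a' : CPerm} {col j : ℕ} (hna : Nod a) (hr : runs a = runs a')
    (hc : j ≤ a.length ∧ ARun col 0 (a.take j)) :
    runs (a.drop j) = runs (a'.drop j) := by
  rcases Nat.eq_zero_or_pos j with rfl | hj0
  · rw [List.drop_zero, List.drop_zero]
    exact hr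
  · cases a with
    | nil =>
      exfalso
      have := hc.1
      simp at this
      omega
    | cons x as =>
      obtain ⟨m, rfl⟩ : ∃ m, j = m + 1 := ⟨j - 1, by omega⟩
      obtain ⟨-, l1, t, he, hl⟩ :=
        (ARun_take_iff as x 0 col m hna
          (by have := hc.1; simp only [List.length_cons] at this; omega)).1 hc.2
      rw [runs_drop _ _ _ _ _ he (by omega) (by omega),
        runs_drop _ _ _ _ _ (hr.symm.trans he) (by omega) (by omega)]

lemma cntP_fits_eq : ∀ (q : List (ℕ × ℕ)) (a b a' b' : CPerm),
    Pos a → Pos b → Pos a' → Pos b' → Nod a → Nod b → Nod a' → Nod b' →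
    Disjoint (symbols a) (symbols b) → Disjoint (symbols a') (symbols b') →
    runs a = runs a' → runs b = runs b' →
    cntP (FitsLo 0 q) (shuffles a b) = cntP (FitsLo 0 q) (shuffles a' b') := by
  intro q
  induction q with
  | nil =>
    intro a b a' b' _ _ _ _ _ _ _ _ _ _ hra hrb
    rw [cntP_congr _ (fun c _ => show FitsLo 0 [] c ↔ c = [] by simp [FitsLo]),
        cntP_congr _ (fun c _ => show FitsLo 0 [] c ↔ c = [] by simp [FitsLo]),
        cntP_nil_pred, cntP_nil_pred]
    apply ind_congr
    have e1 : a = [] ↔ a' = [] := by rw [← runs_nil_iff (a := a), hra, runs_nil_iff]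
    have e2 : b = [] ↔ b' = [] := by rw [← runs_nil_iff (a := b), hrb, runs_nil_iff]
    rw [e1, e2]
  | cons lc q ih =>
    obtain ⟨l, col⟩ := lc
    intro a b a' b' hpa hpb hpa' hpb' hna hnb hna' hnb' hd hd' hra hrb
    rw [claim col q l a b 0 hd, claim col q l a' b' 0 hd']
    apply Finset.sum_congr rfl
    intro j hj
    have hA := AInd_det col j hpa hpa' hna hna' hra
    have hB := AInd_det col (l - j) hpb hpb' hnb hnb' hrb
    rw [hA, hB]
    by_cases hA0 : AInd col 0 a' j = 0
    · rw [hA0]; ring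
    by_cases hB0 : AInd col 0 b' (l - j) = 0
    · rw [hB0]; ring
    have hca : j ≤ a.length ∧ ARun col 0 (a.take j) :=
      AInd_ne_zero (fun h => hA0 (by rw [← hA, h]))
    have hcb : l - j ≤ b.length ∧ ARun col 0 (b.take (l - j)) :=
      AInd_ne_zero (fun h => hB0 (by rw [← hB, h]))
    congr 1
    exact ih (a.drop j) (b.drop (l - j)) (a'.drop j) (b'.drop (l - j))
      (pos_drop _ hpa) (pos_drop _ hpb) (pos_drop _ hpa') (pos_drop _ hpb')
      (nod_drop _ hna) (nod_drop _ hnb) (nod_drop _ hna') (nod_drop _ hnb')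
      (disjoint_drop _ _ hd) (disjoint_drop _ _ hd')
      (runs_drop_det hna hra hca) (runs_drop_det hnb hrb hcb)

end SDesAux
namespace SDesAux

noncomputable def mrg (l col : ℕ) : List (ℕ × ℕ) → Finset (List (ℕ × ℕ))
  | [] => ∅
  | (m, col') :: r' => if col' = col then {(l + m, col) :: r'} else ∅

noncomputable def coars : List (ℕ × ℕ) → Finset (List (ℕ × ℕ))
  | [] => {[]}
  | (l, col) :: q =>
      ((coars q).image fun r => (l, col) :: r) ∪ ((coars q).biUnion (mrg l col))

lemma mem_mrg {l col : ℕ} {r0 r : List (ℕ × ℕ)} :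
    r ∈ mrg l col r0 ↔ ∃ m r', r0 = (m, col) :: r' ∧ r = (l + m, col) :: r' := by
  match r0 with
  | [] => simp [mrg]
  | (m, col') :: r' =>
    rw [show mrg l col ((m, col') :: r') = if col' = col then {(l + m, col) :: r'} else ∅
      from rfl]
    by_cases hcc : col' = col
    · rw [if_pos hcc]
      subst hcc
      simp only [Finset.mem_singleton]
      constructor
      · rintro rfl; exact ⟨m, r', rfl, rfl⟩
      · rintro ⟨m', r'', he, rfl⟩
        simp only [List.cons.injEq, Prod.mk.injEq] at he
        rw [← he.1.1, ← he.2]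
    · rw [if_neg hcc]
      simp only [Finset.notMem_empty, false_iff]
      rintro ⟨m', r'', he, -⟩
      simp only [List.cons.injEq, Prod.mk.injEq] at he
      exact hcc he.1.2

lemma mem_coars_cons {l col : ℕ} {q r : List (ℕ × ℕ)} :
    r ∈ coars ((l, col) :: q) ↔
      (∃ r' ∈ coars q, r = (l, col) :: r') ∨
      (∃ m r', (m, col) :: r' ∈ coars q ∧ r = (l + m, col) :: r') := by
  simp only [coars, Finset.mem_union, Finset.mem_image, Finset.mem_biUnion]
  constructor
  · rintro (⟨r', hr', rfl⟩ | ⟨r0, hr0, hm⟩)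
    · exact Or.inl ⟨r', hr', rfl⟩
    · rcases mem_mrg.1 hm with ⟨m, r', rfl, rfl⟩
      exact Or.inr ⟨m, r', hr0, rfl⟩
  · rintro (⟨r', hr', rfl⟩ | ⟨m, r', hmem, rfl⟩)
    · exact Or.inl ⟨r', hr', rfl⟩
    · exact Or.inr ⟨(m, col) :: r', hmem, mem_mrg.2 ⟨m, r', rfl, rfl⟩⟩

lemma self_mem_coars : ∀ q : List (ℕ × ℕ), q ∈ coars q
  | [] => by simp [coars]
  | (l, col) :: q => mem_coars_cons.2 (Or.inl ⟨q, self_mem_coars q, rfl⟩)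

lemma coars_valid : ∀ {q : List (ℕ × ℕ)}, Valid q → ∀ r ∈ coars q, Valid r
  | [], _, r, hr => by
    simp only [coars, Finset.mem_singleton] at hr
    subst hr
    intro p hp
    cases hp
  | (l, col) :: q, hv, r, hr => by
    have hvq : Valid q := fun p hp => hv p (List.mem_cons_of_mem _ hp)
    have hl : 1 ≤ l := hv (l, col) (List.mem_cons_self)
    rcases mem_coars_cons.1 hr with ⟨r', hr', rfl⟩ | ⟨m, r', hmem, rfl⟩
    · intro p hp
      rcases List.mem_cons.1 hp with rfl | hp
      · exact hl
      · exact coars_valid hvq r' hr' p hp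
    · intro p hp
      rcases List.mem_cons.1 hp with rfl | hp
      · simp only
        omega
      · exact coars_valid hvq ((m, col) :: r') hmem p (List.mem_cons_of_mem _ hp)

lemma coars_len : ∀ {q r : List (ℕ × ℕ)}, r ∈ coars q →
    r.length ≤ q.length ∧ (r.length = q.length → r = q)
  | [], r, hr => by
    simp only [coars, Finset.mem_singleton] at hr
    subst hr
    exact ⟨le_refl _, fun _ => rfl⟩
  | (l, col) :: q, r, hr => by
    rcases mem_coars_cons.1 hr with ⟨r', hr', rfl⟩ | ⟨m, r', hmem, rfl⟩
    · have := coars_len hr'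
      constructor
      · simp only [List.length_cons]
        omega
      · intro h
        simp only [List.length_cons] at h
        rw [this.2 (by omega)]
    · have := coars_len hmem
      simp only [List.length_cons] at this ⊢
      constructor
      · omega
      · intro h
        omega

lemma fits_iff_runs_coars : ∀ (q : List (ℕ × ℕ)) (c : CPerm), Pos c → Nod c → Valid q →
    (FitsLo 0 q c ↔ runs c ∈ coars q)
  | [], c, _, _, _ => by
    have h : FitsLo 0 [] c ↔ c = [] := by simp [FitsLo]
    rw [h]
    simp only [coars, Finset.mem_singleton]
    rw [runs_nil_iff]
  | (l, col) :: q, c, hpos, hnod, hv => by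
    have hvq : Valid q := fun p hp => hv p (List.mem_cons_of_mem _ hp)
    have hl : 1 ≤ l := hv (l, col) (List.mem_cons_self)
    have IH := fits_iff_runs_coars q (c.drop l) (pos_drop _ hpos) (nod_drop _ hnod) hvq
    rw [fitsLo_block, IH, mem_coars_cons]
    constructor
    · rintro ⟨h1, h2, h3⟩
      obtain ⟨x, cs, rfl⟩ : ∃ x cs, c = x :: cs := by
        cases c with
        | nil => simp at h1; omega
        | cons x cs => exact ⟨x, cs, rfl⟩
      obtain ⟨m0, rfl⟩ : ∃ m0, l = m0 + 1 := ⟨l - 1, by omega⟩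
      obtain ⟨-, l1, t, he, hl1⟩ := (ARun_take_iff cs x 0 col m0 hnod
        (by simp only [List.length_cons] at h1; omega)).1 h2
      have hdrop := runs_drop _ _ _ _ _ he (by omega) hl1
      by_cases hll : m0 + 1 = l1
      · rw [if_pos hll] at hdrop
        left
        refine ⟨t, ?_, ?_⟩
        · rw [← hdrop]; exact h3
        · rw [he, hll]
      · rw [if_neg hll] at hdrop
        right
        refine ⟨l1 - (m0 + 1), t, ?_, ?_⟩
        · rw [← hdrop]; exact h3
        · rw [he]
          congr 2
          omega
    · rintro (⟨r', hr', hre⟩ | ⟨m, r', hmem, hre⟩)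
      · have hlen : l ≤ c.length := by
          have := sum_runs c
          rw [hre] at this
          simp only [List.map_cons, List.sum_cons] at this
          omega
        obtain ⟨x, cs, rfl⟩ : ∃ x cs, c = x :: cs := by
          cases c with
          | nil => rw [runs_nil_iff.2 rfl] at hre; cases hre
          | cons x cs => exact ⟨x, cs, rfl⟩
        obtain ⟨m0, rfl⟩ : ∃ m0, l = m0 + 1 := ⟨l - 1, by omega⟩
        simp only [List.length_cons] at hlen
        refine ⟨by simp only [List.length_cons]; omega, ?_, ?_⟩
        · exact (ARun_take_iff cs x 0 col m0 hnod (by omega)).2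
            ⟨hpos x (List.mem_cons_self), m0 + 1, r', hre, le_refl _⟩
        · have hdrop := runs_drop _ _ _ _ _ hre (by omega) (le_refl _)
          rw [if_pos rfl] at hdrop
          rw [hdrop]
          exact hr'
      · have hm1 : 1 ≤ m := coars_valid hvq _ hmem (m, col) (List.mem_cons_self)
        have hlen : l ≤ c.length := by
          have := sum_runs c
          rw [hre] at this
          simp only [List.map_cons, List.sum_cons] at this
          omega
        obtain ⟨x, cs, rfl⟩ : ∃ x cs, c = x :: cs := by
          cases c with
          | nil => rw [runs_nil_iff.2 rfl] at hre; cases hre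
          | cons x cs => exact ⟨x, cs, rfl⟩
        obtain ⟨m0, rfl⟩ : ∃ m0, l = m0 + 1 := ⟨l - 1, by omega⟩
        simp only [List.length_cons] at hlen
        refine ⟨by simp only [List.length_cons]; omega, ?_, ?_⟩
        · exact (ARun_take_iff cs x 0 col m0 hnod (by omega)).2
            ⟨hpos x (List.mem_cons_self), m0 + 1 + m, r', hre,
              show m0 + 1 ≤ m0 + 1 + m by omega⟩
        · have hdrop := runs_drop _ _ _ _ _ hre (show 0 < m0 + 1 by omega)
            (show m0 + 1 ≤ m0 + 1 + m by omega)
          rw [if_neg (show ¬ (m0 + 1 = m0 + 1 + m) by omega)] at hdrop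
          rw [hdrop]
          have : m0 + 1 + m - (m0 + 1) = m := by omega
          rw [this]
          exact hmem

end SDesAux
namespace SDesAux

lemma pos_of_mem_shuffles {a b c : CPerm} (hpa : Pos a) (hpb : Pos b)
    (hc : c ∈ shuffles a b) : Pos c := fun p hp => by
  have h := (perm_of_mem_shuffles a b c hc).subset hp
  rcases List.mem_append.1 h with h | h
  exacts [hpa p h, hpb p h]

lemma nod_of_mem_shuffles {a b c : CPerm} (hna : Nod a) (hnb : Nod b)
    (hd : Disjoint (symbols a) (symbols b)) (hc : c ∈ shuffles a b) : Nod c := by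
  have hperm := (perm_of_mem_shuffles a b c hc).map Prod.fst
  rw [List.map_append] at hperm
  refine hperm.nodup_iff.2 (List.Nodup.append hna hnb ?_)
  intro s hs1 hs2
  exact Finset.disjoint_left.1 hd (by rw [symbols, List.mem_toFinset]; exact hs1)
    (by rw [symbols, List.mem_toFinset]; exact hs2)

lemma cntP_cons (p : CPerm → Prop) (c : CPerm) (M : Multiset CPerm) :
    cntP p (c ::ₘ M) = ind (p c) + cntP p M := by
  unfold cntP ind
  rw [Multiset.countP_cons, add_comm]

lemma sum_ind_eq (F : Finset (List (ℕ × ℕ))) (z : List (ℕ × ℕ)) :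
    ∑ r ∈ F, ind (z = r) = ind (z ∈ F) := by
  by_cases hm : z ∈ F
  · rw [ind_of hm, Finset.sum_eq_single z (fun r _ hne => ind_not (fun he => hne he.symm))
      (fun h => absurd hm h), ind_of rfl]
  · rw [ind_not hm]
    exact Finset.sum_eq_zero (fun r hr => ind_not (fun he => hm (by rw [he]; exact hr)))

lemma cntP_runs_mem (F : Finset (List (ℕ × ℕ))) (M : Multiset CPerm) :
    cntP (fun c => runs c ∈ F) M = ∑ r ∈ F, cntP (fun c => runs c = r) M := by
  induction M using Multiset.induction_on with
  | empty => simp [cntP]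
  | cons c M ih =>
    rw [cntP_cons]
    have : ∀ r ∈ F, cntP (fun c => runs c = r) (c ::ₘ M) =
        ind (runs c = r) + cntP (fun c => runs c = r) M := fun r _ => cntP_cons _ _ _
    rw [Finset.sum_congr rfl this, Finset.sum_add_distrib, sum_ind_eq, ih]

lemma cntP_runs_fiber_eq (a b a' b' : CPerm)
    (hpa : Pos a) (hpb : Pos b) (hpa' : Pos a') (hpb' : Pos b')
    (hna : Nod a) (hnb : Nod b) (hna' : Nod a') (hnb' : Nod b')
    (hd : Disjoint (symbols a) (symbols b)) (hd' : Disjoint (symbols a') (symbols b'))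
    (hra : runs a = runs a') (hrb : runs b = runs b') :
    ∀ q, cntP (fun c => runs c = q) (shuffles a b) =
      cntP (fun c => runs c = q) (shuffles a' b') := by
  have main : ∀ n (q : List (ℕ × ℕ)), Valid q → q.length = n →
      cntP (fun c => runs c = q) (shuffles a b) =
        cntP (fun c => runs c = q) (shuffles a' b') := by
    intro n
    induction n using Nat.strong_induction_on with
    | _ n IH =>
      intro q hv hlen
      have hco : ∀ (u v : CPerm), Pos u → Pos v → Nod u → Nod v →
          Disjoint (symbols u) (symbols v) →
          cntP (FitsLo 0 q) (shuffles u v) =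
            cntP (fun c => runs c ∈ coars q) (shuffles u v) := by
        intro u v hpu hpv hnu hnv hduv
        exact cntP_congr _ (fun c hc => fits_iff_runs_coars q c
          (pos_of_mem_shuffles hpu hpv hc) (nod_of_mem_shuffles hnu hnv hduv hc) hv)
      have hN := cntP_fits_eq q a b a' b' hpa hpb hpa' hpb' hna hnb hna' hnb' hd hd' hra hrb
      rw [hco a b hpa hpb hna hnb hd, hco a' b' hpa' hpb' hna' hnb' hd'] at hN
      rw [cntP_runs_mem, cntP_runs_mem] at hN
      rw [← Finset.add_sum_erase _ _ (self_mem_coars q),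
        ← Finset.add_sum_erase _ _ (self_mem_coars q)] at hN
      have herase : ∑ r ∈ (coars q).erase q, cntP (fun c => runs c = r) (shuffles a b)
          = ∑ r ∈ (coars q).erase q, cntP (fun c => runs c = r) (shuffles a' b') := by
        apply Finset.sum_congr rfl
        intro r hr
        have hrq : r ≠ q := Finset.ne_of_mem_erase hr
        have hrc : r ∈ coars q := Finset.mem_of_mem_erase hr
        have hcl := coars_len hrc
        have hlt : r.length < n := by
          rcases Nat.lt_or_ge r.length q.length with h | h
          · omega
          · exact absurd (hcl.2 (by omega)) hrq
        exact IH r.length hlt r (coars_valid hv r hrc) rfl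
      omega
  intro q
  by_cases hv : Valid q
  · exact main q.length q hv rfl
  · have z : ∀ (u v : CPerm), cntP (fun c => runs c = q) (shuffles u v) = 0 := by
      intro u v
      unfold cntP
      exact (@Multiset.countP_eq_zero CPerm (fun c => runs c = q)
        (fun c => Classical.propDecidable _) _).2
        (fun c hc hce => hv (hce ▸ runs_valid c))
    rw [z, z]

lemma map_runs_shuffles_eq (a b a' b' : CPerm)
    (hpa : Pos a) (hpb : Pos b) (hpa' : Pos a') (hpb' : Pos b')
    (hna : Nod a) (hnb : Nod b) (hna' : Nod a') (hnb' : Nod b')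
    (hd : Disjoint (symbols a) (symbols b)) (hd' : Disjoint (symbols a') (symbols b'))
    (hra : runs a = runs a') (hrb : runs b = runs b') :
    (shuffles a b).map runs = (shuffles a' b').map runs := by
  apply Multiset.ext.2
  intro q
  have key := cntP_runs_fiber_eq a b a' b' hpa hpb hpa' hpb' hna hnb hna' hnb'
    hd hd' hra hrb q
  have h1 : ∀ (M : Multiset CPerm),
      Multiset.count q (M.map runs) = cntP (fun c => runs c = q) M := by
    intro M
    induction M using Multiset.induction_on with
    | empty => simp [cntP]
    | cons c M ih =>
      rw [Multiset.map_cons, Multiset.count_cons, cntP_cons, ih]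
      have : (if q = runs c then 1 else 0) = ind (runs c = q) := by
        by_cases hqc : runs c = q
        · rw [if_pos hqc.symm, ind_of hqc]
        · rw [if_neg (fun h => hqc h.symm), ind_not hqc]
      rw [this, add_comm]
  rw [h1, h1, key]

end SDesAux

/-- **Corollary.** The coloured descent set `sDes` is shuffle compatible. -/
theorem sDes_shuffleCompatible (a b a' b' : CPerm)
    (ha : IsCPerm a) (hb : IsCPerm b) (ha' : IsCPerm a') (hb' : IsCPerm b')
    (hab : SymbolDisjoint a b) (hab' : SymbolDisjoint a' b')
    (hsa : sDes a = sDes a') (hsb : sDes b = sDes b') :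
    (shuffles a b).map sDes = (shuffles a' b').map sDes := by
  have hra := SDesAux.runs_eq_of_sDes_eq hsa
  have hrb := SDesAux.runs_eq_of_sDes_eq hsb
  have hmap := SDesAux.map_runs_shuffles_eq a b a' b' ha.2 hb.2 ha'.2 hb'.2
    ha.1 hb.1 ha'.1 hb'.1 hab hab' hra hrb
  calc (shuffles a b).map sDes
      = (shuffles a b).map (SDesAux.sDesR ∘ SDesAux.runs) :=
        Multiset.map_congr rfl (fun c _ => SDesAux.sDes_eq_runs c)
    _ = ((shuffles a b).map SDesAux.runs).map SDesAux.sDesR := (Multiset.map_map _ _ _).symm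
    _ = ((shuffles a' b').map SDesAux.runs).map SDesAux.sDesR := by rw [hmap]
    _ = (shuffles a' b').map (SDesAux.sDesR ∘ SDesAux.runs) := Multiset.map_map _ _ _
    _ = (shuffles a' b').map sDes :=
        Multiset.map_congr rfl (fun c _ => (SDesAux.sDes_eq_runs c).symm)
end
end
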